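/- arXiv:1910.03328 — 7 statements merged into one kernel-verified Lean document; each statement's English description precedes it below -/
import Mathlib

section
/- For real numbers a, b, c, d, the operator 2-norm of the real 2×2 matrix A = [[a,b],[c,d]] equals (√((a+d)² + (c−b)²) + √((a−d)² + (b+c)²))/2. -/
noncomputable def opNorm (A : Matrix (Fin 2) (Fin 2) ℝ) : ℝ :=
  ‖Matrix.toEuclideanCLM (𝕜 := ℝ) (n := Fin 2) A‖

noncomputable def conorm (A : Matrix (Fin 2) (Fin 2) ℝ) : ℝ :=
  Real.sign A.det * (opNorm A⁻¹)⁻¹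

noncomputable def arcosh (x : ℝ) : ℝ := Real.log (x + Real.sqrt (x ^ 2 - 1))

noncomputable def AC (x : ℝ) : ℝ :=
  if x < 1 then Real.arccos x / Real.sqrt (1 - x ^ 2)
  else if x = 1 then 1
  else arcosh x / Real.sqrt (x ^ 2 - 1)

noncomputable def AS (x : ℝ) : ℝ :=
  if x = 1 then Real.sqrt (1 / 3) else Real.sqrt ((AC x ^ 2 - 1) / (1 - x ^ 2))

noncomputable def AT (x : ℝ) : ℝ := (AC x - 1) / AS x

noncomputable def PDcenter (A : Matrix (Fin 2) (Fin 2) ℝ) : ℂ :=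
  (((A 0 0 + A 1 1) / 2 : ℝ) : ℂ) + ((|A 1 0 - A 0 1| / 2 : ℝ) : ℂ) * Complex.I

noncomputable def PDradius (A : Matrix (Fin 2) (Fin 2) ℝ) : ℝ :=
  Real.sqrt (((A 0 0 - A 1 1) / 2) ^ 2 + ((A 0 1 + A 1 0) / 2) ^ 2)

noncomputable def PD (A : Matrix (Fin 2) (Fin 2) ℝ) : Set ℂ :=
  Metric.closedBall (PDcenter A) (PDradius A)

def LogAble (A : Matrix (Fin 2) (Fin 2) ℝ) : Prop :=
  ∀ z ∈ spectrum ℂ (A.map (fun x => (x : ℂ))), ¬(z.im = 0 ∧ z.re ≤ 0)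

def IsPrincipalLog (A L : Matrix (Fin 2) (Fin 2) ℝ) : Prop :=
  NormedSpace.exp L = A ∧
    ∀ z ∈ spectrum ℂ (L.map (fun x => (x : ℂ))), z.im ∈ Set.Ioo (-Real.pi) Real.pi

lemma myNormApply (A : Matrix (Fin 2) (Fin 2) ℝ) (x : EuclideanSpace ℝ (Fin 2)) :
    ‖Matrix.toEuclideanCLM (𝕜 := ℝ) (n := Fin 2) A x‖ =
      Real.sqrt ((A 0 0 * x 0 + A 0 1 * x 1) ^ 2 + (A 1 0 * x 0 + A 1 1 * x 1) ^ 2) := by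
  rw [EuclideanSpace.norm_eq]
  congr 1
  have h : ∀ i, (Matrix.toEuclideanCLM (𝕜 := ℝ) (n := Fin 2) A x) i = A.mulVec x i := fun i => rfl
  simp [h, Matrix.mulVec, dotProduct, Fin.sum_univ_two, Real.norm_eq_abs, sq_abs]

lemma myNormApply2 (a b c d : ℝ) (x : EuclideanSpace ℝ (Fin 2)) :
    ‖Matrix.toEuclideanCLM (𝕜 := ℝ) (n := Fin 2) !![a, b; c, d] x‖ =
      Real.sqrt ((a * x 0 + b * x 1) ^ 2 + (c * x 0 + d * x 1) ^ 2) := by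
  rw [myNormApply]; rfl

lemma myNormVec (x : EuclideanSpace ℝ (Fin 2)) : ‖x‖ = Real.sqrt (x 0 ^ 2 + x 1 ^ 2) := by
  rw [EuclideanSpace.norm_eq]
  simp [Fin.sum_univ_two, Real.norm_eq_abs, sq_abs]

set_option maxHeartbeats 1600000 in
theorem stmt0 (a b c d : ℝ) :
    opNorm !![a, b; c, d] =
      (Real.sqrt ((a + d) ^ 2 + (c - b) ^ 2) + Real.sqrt ((a - d) ^ 2 + (b + c) ^ 2)) / 2 := by
  set s := Real.sqrt ((a + d) ^ 2 + (c - b) ^ 2) with hs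
  set t := Real.sqrt ((a - d) ^ 2 + (b + c) ^ 2) with ht
  set u := Real.sqrt ((a^2 + c^2 - (b^2 + d^2)) ^ 2 + 4 * (a*b + c*d) ^ 2) with hudef
  have hu0 : 0 ≤ u := Real.sqrt_nonneg _
  have hu2 : u ^ 2 = (a^2 + c^2 - (b^2 + d^2)) ^ 2 + 4 * (a*b + c*d) ^ 2 :=
    Real.sq_sqrt (by positivity)
  have hs0 : 0 ≤ s := Real.sqrt_nonneg _
  have ht0 : 0 ≤ t := Real.sqrt_nonneg _
  have hs2 : s ^ 2 = (a + d) ^ 2 + (c - b) ^ 2 := Real.sq_sqrt (by positivity)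
  have ht2 : t ^ 2 = (a - d) ^ 2 + (b + c) ^ 2 := Real.sq_sqrt (by positivity)
  have hst : s * t = u := by
    rw [hs, ht, hudef, ← Real.sqrt_mul (by positivity)]
    congr 1; ring
  set N := (s + t) / 2 with hNdef
  have hN0 : 0 ≤ N := by positivity
  set lam := (a^2 + c^2 + (b^2 + d^2) + u) / 2 with hlamdef
  have hNlam : N ^ 2 = lam := by
    rw [hNdef, hlamdef]; linear_combination hs2/4 + ht2/4 + hst/2
  have hQ2 : (lam - (a^2+c^2)) * (lam - (b^2+d^2)) = (a*b+c*d)^2 := by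
    rw [hlamdef]; linear_combination hu2/4
  have ub : ∀ x y : ℝ, (a*x + b*y)^2 + (c*x + d*y)^2 ≤ lam * (x^2 + y^2) := by
    intro x y
    rw [hlamdef]
    nlinarith [hu2, sq_nonneg ((a*b+c*d)*(x^2-y^2) - (a^2+c^2-(b^2+d^2))*x*y),
      mul_nonneg hu0 (by positivity : (0:ℝ) ≤ x^2 + y^2), sq_nonneg (x^2+y^2), sq_nonneg (x*y)]
  have hex : ∃ x0 y0 : ℝ, 0 < x0^2 + y0^2 ∧
      (a*x0 + b*y0)^2 + (c*x0 + d*y0)^2 = lam * (x0^2 + y0^2) := by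
    by_cases h : lam - (b^2+d^2) = 0 ∧ a*b + c*d = 0
    · exact ⟨0, 1, by norm_num, by linear_combination (-1 : ℝ) * h.1⟩
    · refine ⟨lam - (b^2+d^2), a*b + c*d, ?_, by linear_combination (-(lam - (b^2+d^2))) * hQ2⟩
      rcases not_and_or.mp h with h1 | h1
      · have := (sq_nonneg (lam - (b^2+d^2))).lt_of_ne (Ne.symm (pow_ne_zero 2 h1))
        nlinarith [sq_nonneg (a*b+c*d)]
      · have := (sq_nonneg (a*b+c*d)).lt_of_ne (Ne.symm (pow_ne_zero 2 h1))
        nlinarith [sq_nonneg (lam - (b^2+d^2))]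
  obtain ⟨x0, y0, hpos, heq⟩ := hex
  have hNs : ∀ z : ℝ, N * Real.sqrt z = Real.sqrt (lam * z) := by
    intro z
    rw [← hNlam, Real.sqrt_mul (sq_nonneg N), Real.sqrt_sq hN0]
  show ‖Matrix.toEuclideanCLM (𝕜 := ℝ) (n := Fin 2) !![a, b; c, d]‖ = N
  apply le_antisymm
  · apply ContinuousLinearMap.opNorm_le_bound _ hN0
    intro x
    rw [myNormApply2, myNormVec, hNs]
    exact Real.sqrt_le_sqrt (ub (x 0) (x 1))
  · set v : EuclideanSpace ℝ (Fin 2) := (WithLp.equiv 2 _).symm ![x0, y0] with hv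
    have hv0 : v 0 = x0 := rfl
    have hv1 : v 1 = y0 := rfl
    have hnv : ‖v‖ = Real.sqrt (x0^2 + y0^2) := by rw [myNormVec, hv0, hv1]
    have hnvpos : 0 < ‖v‖ := by rw [hnv]; exact Real.sqrt_pos.mpr hpos
    have hfv : ‖Matrix.toEuclideanCLM (𝕜 := ℝ) (n := Fin 2) !![a, b; c, d] v‖ = N * ‖v‖ := by
      rw [myNormApply2, hnv, hv0, hv1, hNs, heq]
    have hle := ContinuousLinearMap.le_opNorm
      (Matrix.toEuclideanCLM (𝕜 := ℝ) (n := Fin 2) !![a, b; c, d]) v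
    rw [hfv] at hle
    exact le_of_mul_le_mul_right hle hnvpos
end

section
/- With AC and AS as above, define AT(x) = (AC(x) − 1)/AS(x). Then x ↦ x + AT(x) is strictly increasing on (−1, 1] and is a bijection from (−1, 1] to (−1, 1]. -/
set_option maxHeartbeats 1600000



lemma sin_ge_poly (x : ℝ) (hx : 0 ≤ x) : x - x^3/6 ≤ Real.sin x := by
  have key : MonotoneOn (fun t : ℝ => Real.sin t - t + t^3/6) (Set.Ici 0) := by
    apply monotoneOn_of_deriv_nonneg (convex_Ici 0)
    · fun_prop
    · fun_prop
    · intro t _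
      have h : HasDerivAt (fun t : ℝ => Real.sin t - t + t^3/6)
          (Real.cos t - 1 + 3*t^2/6) t := by
        exact (((Real.hasDerivAt_sin t).sub (hasDerivAt_id t)).add
          (((hasDerivAt_pow 3 t).div_const 6))).congr_deriv (by norm_num)
      rw [h.deriv]
      nlinarith [Real.one_sub_sq_div_two_le_cos (x := t)]
  have h := key (Set.self_mem_Ici) (Set.mem_Ici.2 hx) hx
  simp only [Real.sin_zero] at h
  nlinarith [h]

lemma cos_le_poly (x : ℝ) (hx : 0 ≤ x) : Real.cos x ≤ 1 - x^2/2 + x^4/24 := by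
  have key : MonotoneOn (fun t : ℝ => 1 - t^2/2 + t^4/24 - Real.cos t) (Set.Ici 0) := by
    apply monotoneOn_of_deriv_nonneg (convex_Ici 0)
    · fun_prop
    · fun_prop
    · intro t ht
      have ht' : (0:ℝ) ≤ t := le_of_lt (by simpa using ht)
      have h : HasDerivAt (fun t : ℝ => 1 - t^2/2 + t^4/24 - Real.cos t)
          (0 - 2*t/2 + 4*t^3/24 - (-Real.sin t)) t := by
        exact ((((hasDerivAt_const t (1:ℝ)).sub ((hasDerivAt_pow 2 t).div_const 2)).add
          ((hasDerivAt_pow 4 t).div_const 24)).sub (Real.hasDerivAt_cos t)).congr_deriv (by ring_nf)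
      rw [h.deriv]
      nlinarith [sin_ge_poly t ht']
  have h := key (Set.self_mem_Ici) (Set.mem_Ici.2 hx) hx
  simp only [Real.cos_zero] at h
  nlinarith [h]

lemma sin_le_poly (x : ℝ) (hx : 0 ≤ x) : Real.sin x ≤ x - x^3/6 + x^5/120 := by
  have key : MonotoneOn (fun t : ℝ => t - t^3/6 + t^5/120 - Real.sin t) (Set.Ici 0) := by
    apply monotoneOn_of_deriv_nonneg (convex_Ici 0)
    · fun_prop
    · fun_prop
    · intro t ht
      have ht' : (0:ℝ) ≤ t := le_of_lt (by simpa using ht)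
      have h : HasDerivAt (fun t : ℝ => t - t^3/6 + t^5/120 - Real.sin t)
          (1 - 3*t^2/6 + 5*t^4/120 - Real.cos t) t := by
        exact (((hasDerivAt_id t).sub ((hasDerivAt_pow 3 t).div_const 6)).add
          ((hasDerivAt_pow 5 t).div_const 120)).sub (Real.hasDerivAt_sin t) |>.congr_deriv (by ring_nf)
      rw [h.deriv]
      nlinarith [cos_le_poly t ht']
  have h := key (Set.self_mem_Ici) (Set.mem_Ici.2 hx) hx
  simp only [Real.sin_zero] at h
  nlinarith [h]

lemma aux1 (t:ℝ) (h1:(0:ℝ)<t)(h2:t≤1) : 4/9*t^4 < 8*t^4*(1-t/6)^5*(1/6-t/120) := by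
  have h3 : (0:ℝ) < t^4 := by positivity
  rw [show 8*t^4*(1-t/6)^5*(1/6-t/120) = t^4*(8*(1-t/6)^5*(1/6-t/120)) by ring,
      show 4/9*t^4 = t^4*(4/9) by ring]
  apply mul_lt_mul_of_pos_left _ h3
  nlinarith [sq_nonneg (1-t), sq_nonneg t, mul_pos h1 h1, sq_nonneg (t*(1-t))]

lemma key_small (θ s c : ℝ) (hθ : 0 < θ) (hθ2 : θ ≤ 1)
    (hs1 : θ - θ^3/6 ≤ s) (hs2 : s ≤ θ - θ^3/6 + θ^5/120)
    (hc : 0 < c) (hc1 : 1 - θ^2/2 ≤ c) (hc2 : c ≤ 1 - θ^2/2 + θ^4/24) :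
    (c*θ*(θ-s) + s^2*(1-c))^2 < s^2*(θ-s)*(θ+s)^3 := by
  have hθ5 : θ^5 ≤ θ^3 := pow_le_pow_of_le_one hθ.le hθ2 (by norm_num)
  have hθ4 : θ^4 ≤ θ^2 := pow_le_pow_of_le_one hθ.le hθ2 (by norm_num)
  have hs0 : 0 ≤ s := by nlinarith
  have hsθ : s ≤ θ := by linarith
  have hc1' : c ≤ 1 := by nlinarith
  have ha : 0 ≤ θ - s := by linarith
  have haθ : θ - s ≤ θ^3/6 := by linarith
  have hd : 0 ≤ 1 - c := by linarith
  have hN0 : 0 ≤ c*θ*(θ-s) + s^2*(1-c) := by positivity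
  have h1 : c*θ*(θ-s) ≤ θ^4/6 := by
    nlinarith [mul_le_mul_of_nonneg_left haθ (mul_nonneg hc.le hθ.le),
      mul_le_mul_of_nonneg_right hc1' (mul_nonneg hθ.le (by positivity : (0:ℝ) ≤ θ^3/6))]
  have h2 : s^2*(1-c) ≤ θ^2*(θ^2/2) := by
    nlinarith [mul_le_mul_of_nonneg_right (mul_self_le_mul_self hs0 hsθ) hd,
      mul_le_mul_of_nonneg_left (by linarith : 1 - c ≤ θ^2/2) (mul_nonneg hθ.le hθ.le)]
  have hN : c*θ*(θ-s) + s^2*(1-c) ≤ 2/3*θ^4 := by nlinarith [h1, h2]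
  have hR : (θ-θ^3/6)^2*(θ^3/6-θ^5/120)*((θ-θ^3/6)+(θ-θ^3/6))^3 ≤ s^2*(θ-s)*(θ+s)^3 := by
    have e1 : (0:ℝ) ≤ θ - θ^3/6 := by nlinarith
    have e2 : (0:ℝ) ≤ θ^3/6 - θ^5/120 := by nlinarith
    have hA : (θ-θ^3/6)^2 ≤ s^2 := pow_le_pow_left₀ e1 hs1 2
    have hC : ((θ-θ^3/6)+(θ-θ^3/6))^3 ≤ (θ+s)^3 :=
      pow_le_pow_left₀ (by linarith) (by linarith) 3
    have hB : θ^3/6-θ^5/120 ≤ θ-s := by linarith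
    have := mul_le_mul (mul_le_mul hA hB e2 (by positivity)) hC (by positivity)
      (by nlinarith [mul_nonneg (sq_nonneg s) ha])
    linarith [this]
  have h := aux1 (θ^2) (by positivity) (pow_le_one₀ hθ.le hθ2)
  have hfin : (2/3*θ^4)^2 < (θ-θ^3/6)^2*(θ^3/6-θ^5/120)*((θ-θ^3/6)+(θ-θ^3/6))^3 := by
    linarith [h, sq_nonneg θ]
  calc (c*θ*(θ-s) + s^2*(1-c))^2 ≤ (2/3*θ^4)^2 := pow_le_pow_left₀ hN0 hN 2
    _ < _ := lt_of_lt_of_le hfin hR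

lemma key_gen (θ s c slo chi ahi alo dhi U vlo : ℝ)
    (hθ0 : 0 < θ) (hθU : θ ≤ U) (hU0 : 0 ≤ U)
    (hslo : slo ≤ s) (hs1 : s ≤ 1) (hslo0 : 0 ≤ slo)
    (hc0 : 0 ≤ c) (hchi : c ≤ chi) (hchi0 : 0 ≤ chi)
    (ha0 : 0 ≤ θ - s) (hahi : θ - s ≤ ahi) (halo : alo ≤ θ - s) (halo0 : 0 ≤ alo)
    (hd0 : 0 ≤ 1 - c) (hd : 1 - c ≤ dhi)
    (hvlo : vlo ≤ θ + s) (hvlo0 : 0 ≤ vlo)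
    (hnum : (chi*U*ahi + dhi)^2 < slo^2*alo*vlo^3) :
    (c*θ*(θ-s) + s^2*(1-c))^2 < s^2*(θ-s)*(θ+s)^3 := by
  have hs0 : 0 ≤ s := le_trans hslo0 hslo
  have hN0 : 0 ≤ c*θ*(θ-s) + s^2*(1-c) := by positivity
  have hs2le : s^2 ≤ 1 := by nlinarith
  have h1 : c*θ*(θ-s) ≤ chi*U*ahi := by
    have := mul_le_mul (mul_le_mul hchi hθU hθ0.le hchi0) hahi ha0
      (mul_nonneg hchi0 hU0)
    linarith
  have h2 : s^2*(1-c) ≤ dhi := by nlinarith [mul_le_mul hs2le hd hd0 zero_le_one]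
  have hN : c*θ*(θ-s) + s^2*(1-c) ≤ chi*U*ahi + dhi := by linarith
  have hR : slo^2*alo*vlo^3 ≤ s^2*(θ-s)*(θ+s)^3 := by
    have hA : slo^2 ≤ s^2 := pow_le_pow_left₀ hslo0 hslo 2
    have hC : vlo^3 ≤ (θ+s)^3 := pow_le_pow_left₀ hvlo0 hvlo 3
    have := mul_le_mul (mul_le_mul hA halo halo0 (sq_nonneg s)) hC
      (pow_nonneg hvlo0 3) (mul_nonneg (sq_nonneg s) ha0)
    linarith
  calc (c*θ*(θ-s) + s^2*(1-c))^2 ≤ (chi*U*ahi + dhi)^2 := pow_le_pow_left₀ hN0 hN 2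
    _ < slo^2*alo*vlo^3 := hnum
    _ ≤ _ := hR

lemma key_big (θ s c : ℝ) (hθ : 1 ≤ θ) (hθ2 : θ ≤ 1.5708)
    (hs1 : θ - θ^3/6 ≤ s) (hs2 : s ≤ θ - θ^3/6 + θ^5/120) (hs3 : s ≤ 1)
    (hc : 0 < c) (hc1 : 1 - θ^2/2 ≤ c) (hc2 : c ≤ 1 - θ^2/2 + θ^4/24) :
    (c*θ*(θ-s) + s^2*(1-c))^2 < s^2*(θ-s)*(θ+s)^3 := by
  have hθ0 : (0:ℝ) < θ := by linarith
  have ha0 : (0:ℝ) ≤ θ - s := by linarith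
  have hd0 : (0:ℝ) ≤ 1 - c := by nlinarith
  rcases le_or_gt θ 1.14 with hU | hL
  · refine key_gen θ s c 0.83 0.542 0.247 0.158 0.65 1.14 1.83 hθ0 hU (by norm_num)
      (by nlinarith [mul_nonneg (sub_nonneg.2 hθ) (sub_nonneg.2 hU)]) hs3 (by norm_num)
      hc.le (by nlinarith [mul_nonneg (sub_nonneg.2 hθ) (sub_nonneg.2 hU)]) (by norm_num)
      ha0 (by nlinarith [pow_le_pow_left₀ hθ0.le hU 3]) (by nlinarith [mul_nonneg (sub_nonneg.2 hθ) (sub_nonneg.2 hU)]) (by norm_num)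
      hd0 (by nlinarith) (by nlinarith [mul_nonneg (sub_nonneg.2 hθ) (sub_nonneg.2 hU), hs1]) (by norm_num) (by norm_num)
  · rcases le_or_gt θ 1.35 with hU | hL2
    · refine key_gen θ s c 0.893 0.421 0.411 0.23 0.912 1.35 2.033 hθ0 hU (by norm_num)
        (by nlinarith [mul_nonneg (sub_nonneg.2 hL.le) (sub_nonneg.2 hU)]) hs3 (by norm_num)
        hc.le (by nlinarith [mul_nonneg (sub_nonneg.2 hL.le) (sub_nonneg.2 hU)]) (by norm_num)
        ha0 (by nlinarith [pow_le_pow_left₀ hθ0.le hU 3]) (by nlinarith [mul_nonneg (sub_nonneg.2 hL.le) (sub_nonneg.2 hU)]) (by norm_num)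
        hd0 (by nlinarith) (by nlinarith [mul_nonneg (sub_nonneg.2 hL.le) (sub_nonneg.2 hU), hs1]) (by norm_num) (by norm_num)
    · refine key_gen θ s c 0.924 0.228 0.646 0.372 1 1.5708 2.274 hθ0 hθ2 (by norm_num)
        (by nlinarith [mul_nonneg (sub_nonneg.2 hL2.le) (sub_nonneg.2 hθ2)]) hs3 (by norm_num)
        hc.le (by nlinarith [mul_nonneg (sub_nonneg.2 hL2.le) (sub_nonneg.2 hθ2)]) (by norm_num)
        ha0 (by nlinarith [pow_le_pow_left₀ hθ0.le hθ2 3]) (by nlinarith [mul_nonneg (sub_nonneg.2 hL2.le) (sub_nonneg.2 hθ2)]) (by norm_num)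
        hd0 (by linarith) (by nlinarith [mul_nonneg (sub_nonneg.2 hL2.le) (sub_nonneg.2 hθ2), hs1]) (by norm_num) (by norm_num)

noncomputable def gg (θ : ℝ) : ℝ :=
  Real.cos θ + Real.sin θ * (θ - Real.sin θ) / Real.sqrt (θ^2 - Real.sin θ^2)

lemma w_pos {θ : ℝ} (h1 : 0 < θ) (h2 : θ ≤ Real.pi) : 0 < θ^2 - Real.sin θ^2 := by
  have hs : Real.sin θ < θ := Real.sin_lt h1
  have hs0 : 0 ≤ Real.sin θ := Real.sin_nonneg_of_nonneg_of_le_pi h1.le h2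
  nlinarith

lemma hasDeriv_gg (θ : ℝ) (h1 : 0 < θ) (h2 : θ < Real.pi) :
    HasDerivAt gg (-Real.sin θ +
      (Real.cos θ*θ*(θ-Real.sin θ) + Real.sin θ^2*(1-Real.cos θ)) /
        ((θ+Real.sin θ) * Real.sqrt (θ^2 - Real.sin θ^2))) θ := by
  set s := Real.sin θ with hs
  set c := Real.cos θ with hc
  have hw : 0 < θ^2 - s^2 := w_pos h1 h2.le
  have hr : 0 < Real.sqrt (θ^2 - s^2) := Real.sqrt_pos.2 hw
  set r := Real.sqrt (θ^2 - s^2) with hrdef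
  have hr2 : r^2 = θ^2 - s^2 := Real.sq_sqrt hw.le
  have hspos : 0 < s := Real.sin_pos_of_pos_of_lt_pi h1 h2
  have hv : 0 < θ + s := by linarith
  have hw' : HasDerivAt (fun t : ℝ => t^2 - Real.sin t^2) (2*θ - 2*s*c) θ := by
    have := (hasDerivAt_pow 2 θ).sub (((Real.hasDerivAt_sin θ)).pow 2)
    exact this.congr_deriv (by push_cast; ring)
  have hsq : HasDerivAt (fun t : ℝ => Real.sqrt (t^2 - Real.sin t^2))
      ((2*θ - 2*s*c) / (2*r)) θ := hw'.sqrt hw.ne'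
  have hnum : HasDerivAt (fun t : ℝ => Real.sin t * (t - Real.sin t))
      (c*(θ-s) + s*(1-c)) θ := by
    have := (Real.hasDerivAt_sin θ).mul ((hasDerivAt_id θ).sub (Real.hasDerivAt_sin θ))
    exact this.congr_deriv (by simp only [hs, hc, Pi.sub_apply, id_eq])
  have hdiv := hnum.div hsq hr.ne'
  have := (Real.hasDerivAt_cos θ).add hdiv
  refine this.congr_deriv ?_
  have hexp : ((c*(θ-s) + s*(1-c)) * r - s * (θ - s) * ((2*θ - 2*s*c) / (2*r))) / r^2
      = (c*θ*(θ-s) + s^2*(1-c)) / ((θ+s) * r) := by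
    rw [div_eq_div_iff (by positivity) (by positivity)]
    field_simp
    linear_combination (s*(θ-c*s)) * hr2
  rw [hexp]

lemma key_trig (θ : ℝ) (h1 : 0 < θ) (h2 : θ < Real.pi) :
    Real.cos θ*θ*(θ-Real.sin θ) + Real.sin θ^2*(1-Real.cos θ)
      < Real.sin θ * (θ+Real.sin θ) * Real.sqrt (θ^2 - Real.sin θ^2) := by
  set s := Real.sin θ with hsdef
  set c := Real.cos θ with hcdef
  have hw : 0 < θ^2 - s^2 := w_pos h1 h2.le
  have hr : 0 < Real.sqrt (θ^2 - s^2) := Real.sqrt_pos.2 hw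
  set r := Real.sqrt (θ^2 - s^2) with hrdef
  have hr2 : r^2 = θ^2 - s^2 := Real.sq_sqrt hw.le
  have hspos : 0 < s := Real.sin_pos_of_pos_of_lt_pi h1 h2
  have hsθ : s < θ := Real.sin_lt h1
  have hs1 : s ≤ 1 := Real.sin_le_one θ
  rcases le_or_gt c 0 with hc | hc
  · -- θ ≥ π/2
    have hπ2 : Real.pi/2 ≤ θ := by
      by_contra h
      push_neg at h
      exact absurd (Real.cos_pos_of_mem_Ioo ⟨by linarith [Real.pi_pos], h⟩) (not_lt.2 hc)
    have hθ157 : (1.57:ℝ) ≤ θ := by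
      have := Real.pi_gt_d6
      linarith
    have e2 : (1.57:ℝ)-s ≤ θ-s := by linarith
    have e1 : ((1.57:ℝ)+s)^3 ≤ (θ+s)^3 := pow_le_pow_left₀ (by linarith) (by linarith) 3
    have e3 : ((1.57:ℝ)+s)^3*(1.57-s) ≤ (θ+s)^3*(θ-s) :=
      mul_le_mul e1 e2 (by linarith) (by positivity)
    have c3 : 0 ≤ s^2*(1-s) := mul_nonneg (sq_nonneg s) (by linarith)
    have c4 : 0 ≤ s^3*(1-s) := mul_nonneg (pow_nonneg hspos.le 3) (by linarith)
    have e4 : 4*s^2 < ((1.57:ℝ)+s)^3*(1.57-s) := by nlinarith [hspos, hs1, c3, c4]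
    have h2s : 2*s < (θ+s)*r := by
      have hsq : (2*s)^2 < ((θ+s)*r)^2 := by
        have hrw : ((θ+s)*r)^2 = (θ+s)^2*(θ^2-s^2) := by rw [mul_pow, hr2]
        rw [hrw]
        nlinarith [e3, e4]
      exact lt_of_pow_lt_pow_left₀ 2 (by positivity) hsq
    have hterm : c*θ*(θ-s) ≤ 0 :=
      mul_nonpos_of_nonpos_of_nonneg (mul_nonpos_of_nonpos_of_nonneg hc h1.le) (by linarith)
    nlinarith [hterm, mul_lt_mul_of_pos_left h2s hspos,
      mul_nonneg (sq_nonneg s) (by linarith [Real.neg_one_le_cos θ] : (0:ℝ) ≤ 1 + c)]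
  · -- θ < π/2 < 1.5708
    have hθπ2 : θ < Real.pi/2 := by
      by_contra h
      push_neg at h
      have := Real.cos_nonpos_of_pi_div_two_le_of_le h (by linarith [Real.pi_pos])
      linarith
    have hθ2 : θ < 1.5708 := by
      have := Real.pi_lt_d6
      linarith
    have hd0 : (0:ℝ) ≤ 1 - c := by linarith [Real.cos_le_one θ]
    have hN0 : 0 ≤ c*θ*(θ-s) + s^2*(1-c) :=
      add_nonneg (mul_nonneg (mul_nonneg hc.le h1.le) (by linarith : (0:ℝ) ≤ θ - s))
        (mul_nonneg (sq_nonneg s) hd0)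
    have hsq : (c*θ*(θ-s) + s^2*(1-c))^2 < s^2*(θ-s)*(θ+s)^3 := by
      rcases le_or_gt θ 1 with hθ1 | hθ1
      · exact key_small θ s c h1 hθ1 (sin_ge_poly θ h1.le) (sin_le_poly θ h1.le) hc
          (Real.one_sub_sq_div_two_le_cos) (cos_le_poly θ h1.le)
      · exact key_big θ s c hθ1.le hθ2.le (sin_ge_poly θ h1.le) (sin_le_poly θ h1.le) hs1 hc
          (Real.one_sub_sq_div_two_le_cos) (cos_le_poly θ h1.le)
    have hrhs : (s*(θ+s)*r)^2 = s^2*(θ-s)*(θ+s)^3 := by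
      rw [mul_pow, mul_pow, hr2]; ring
    have : (c*θ*(θ-s) + s^2*(1-c))^2 < (s*(θ+s)*r)^2 := by rw [hrhs]; exact hsq
    exact lt_of_pow_lt_pow_left₀ 2 (by positivity) this

lemma deriv_gg_neg (θ : ℝ) (h1 : 0 < θ) (h2 : θ < Real.pi) : deriv gg θ < 0 := by
  rw [(hasDeriv_gg θ h1 h2).deriv]
  set s := Real.sin θ
  set c := Real.cos θ
  have hw : 0 < θ^2 - s^2 := w_pos h1 h2.le
  have hr : 0 < Real.sqrt (θ^2 - s^2) := Real.sqrt_pos.2 hw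
  have hspos : 0 < s := Real.sin_pos_of_pos_of_lt_pi h1 h2
  have hv : 0 < θ + s := by linarith
  have hkey := key_trig θ h1 h2
  have hdiv : (c*θ*(θ-s) + s^2*(1-c)) / ((θ+s) * Real.sqrt (θ^2-s^2)) < s := by
    rw [div_lt_iff₀ (by positivity)]
    calc c*θ*(θ-s) + s^2*(1-c) < s * (θ+s) * Real.sqrt (θ^2-s^2) := hkey
      _ = s * ((θ+s) * Real.sqrt (θ^2-s^2)) := by ring
  linarith

lemma gg_contOn : ContinuousOn gg (Set.Icc 0 Real.pi) := by
  intro x hx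
  rcases eq_or_lt_of_le hx.1 with h0 | h0
  · -- x = 0
    subst h0
    have hterm : ContinuousWithinAt
        (fun θ : ℝ => Real.sin θ * (θ - Real.sin θ) / Real.sqrt (θ^2 - Real.sin θ^2))
        (Set.Icc 0 Real.pi) 0 := by
      have hbound : ∀ θ ∈ Set.Icc (0:ℝ) Real.pi,
          Real.sin θ * (θ - Real.sin θ) / Real.sqrt (θ^2 - Real.sin θ^2) ∈
            Set.Icc (0:ℝ) (Real.sin θ) := by
        intro θ hθ
        rcases eq_or_lt_of_le hθ.1 with h | h
        · simp [← h]
        · have hs0 : 0 ≤ Real.sin θ := Real.sin_nonneg_of_nonneg_of_le_pi hθ.1 hθ.2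
          have hsθ : Real.sin θ < θ := Real.sin_lt h
          have hw : 0 < θ^2 - Real.sin θ^2 := w_pos h hθ.2
          have hr : 0 < Real.sqrt (θ^2 - Real.sin θ^2) := Real.sqrt_pos.2 hw
          constructor
          · exact div_nonneg (mul_nonneg hs0 (by linarith)) hr.le
          · rw [div_le_iff₀ hr]
            have h1 : θ - Real.sin θ ≤ Real.sqrt (θ^2 - Real.sin θ^2) := by
              rw [show θ^2 - Real.sin θ^2 = (θ - Real.sin θ)*(θ + Real.sin θ) by ring]
              calc θ - Real.sin θ = Real.sqrt ((θ - Real.sin θ)^2) := by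
                    rw [Real.sqrt_sq (by linarith)]
                _ ≤ _ := Real.sqrt_le_sqrt (by nlinarith)
            calc Real.sin θ * (θ - Real.sin θ)
                ≤ Real.sin θ * Real.sqrt (θ^2 - Real.sin θ^2) :=
                  mul_le_mul_of_nonneg_left h1 hs0
              _ = _ := by ring
      unfold ContinuousWithinAt
      beta_reduce
      have h00 : Real.sin 0 * ((0:ℝ) - Real.sin 0) / Real.sqrt (0^2 - Real.sin 0^2) = 0 := by
        simp
      rw [h00]
      apply squeeze_zero'
      · filter_upwards [eventually_mem_nhdsWithin] with t ht
        exact (hbound t ht).1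
      · filter_upwards [eventually_mem_nhdsWithin] with t ht
        exact (hbound t ht).2
      · have : Filter.Tendsto Real.sin (nhdsWithin 0 (Set.Icc 0 Real.pi)) (nhds (Real.sin 0)) :=
          (Real.continuous_sin.tendsto 0).mono_left nhdsWithin_le_nhds
        simpa using this
    exact (Real.continuous_cos.continuousWithinAt).add hterm
  · -- x > 0
    have hw : 0 < x^2 - Real.sin x^2 := w_pos h0 hx.2
    apply ContinuousAt.continuousWithinAt
    apply (Real.continuous_cos.continuousAt).add
    apply ContinuousAt.div
    · fun_prop
    · exact (Real.continuous_sqrt.continuousAt).comp (by fun_prop)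
    · exact (Real.sqrt_pos.2 hw).ne'

lemma gg_strictAnti : StrictAntiOn gg (Set.Icc 0 Real.pi) := by
  apply strictAntiOn_of_deriv_neg (convex_Icc 0 Real.pi) gg_contOn
  · intro x hx
    rw [interior_Icc] at hx
    exact deriv_gg_neg x hx.1 hx.2

lemma gg_zero : gg 0 = 1 := by simp [gg]

lemma gg_pi : gg Real.pi = -1 := by simp [gg]

lemma f_eq (x : ℝ) (hx : x ∈ Set.Ioc (-1:ℝ) 1) : x + AT x = gg (Real.arccos x) := by
  rcases eq_or_lt_of_le hx.2 with h1 | h1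
  · subst h1
    rw [Real.arccos_one, gg_zero]
    have hAC : AC 1 = 1 := by simp [AC]
    simp [AT, hAC]
  · set θ := Real.arccos x with hθdef
    have hθ1 : 0 < θ := Real.arccos_pos.2 h1
    have hθπ : θ ≤ Real.pi := Real.arccos_le_pi x
    have hθ2 : θ < Real.pi := by
      rcases eq_or_lt_of_le hθπ with h | h
      · exfalso
        have := Real.cos_arccos (by linarith [hx.1]) hx.2
        rw [← hθdef, h, Real.cos_pi] at this
        linarith [hx.1]
      · exact h
    have hcos : Real.cos θ = x := Real.cos_arccos (by linarith [hx.1]) hx.2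
    have hx2 : (0:ℝ) < 1 - x^2 := by nlinarith [hx.1]
    have hsin : Real.sin θ = Real.sqrt (1 - x^2) := Real.sin_arccos x
    have hs0 : 0 < Real.sin θ := Real.sin_pos_of_pos_of_lt_pi hθ1 hθ2
    have hs2 : Real.sin θ^2 = 1 - x^2 := by
      rw [hsin, Real.sq_sqrt hx2.le]
    set s := Real.sin θ with hsdef
    have hw : 0 < θ^2 - s^2 := w_pos hθ1 hθ2.le
    have hr : 0 < Real.sqrt (θ^2 - s^2) := Real.sqrt_pos.2 hw
    have hAC : AC x = θ / s := by
      rw [AC, if_pos h1, ← hsin, hθdef]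
    have hAS : AS x = Real.sqrt (θ^2 - s^2) / s^2 := by
      rw [AS, if_neg (by linarith : x ≠ 1), hAC]
      have he : ((θ/s)^2 - 1)/(1 - x^2) = (θ^2 - s^2)/(s^2)^2 := by
        rw [← hs2]
        field_simp
        try ring
        try simp
      rw [he, Real.sqrt_div hw.le, Real.sqrt_sq (by positivity)]
    have hAT : AT x = s * (θ - s) / Real.sqrt (θ^2 - s^2) := by
      rw [AT, hAC, hAS]
      field_simp
    rw [hAT, gg, hcos, ← hsdef]


theorem stmt7 :
    StrictMonoOn (fun x => x + AT x) (Set.Ioc (-1 : ℝ) 1) ∧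
    Set.BijOn (fun x => x + AT x) (Set.Ioc (-1 : ℝ) 1) (Set.Ioc (-1 : ℝ) 1) := by
  have ggAnti : StrictAntiOn gg (Set.Icc 0 Real.pi) := gg_strictAnti
  have ggCont : ContinuousOn gg (Set.Icc 0 Real.pi) := gg_contOn
  have hmem : ∀ x ∈ Set.Ioc (-1:ℝ) 1, Real.arccos x ∈ Set.Icc 0 Real.pi := fun x _ =>
    ⟨Real.arccos_nonneg x, Real.arccos_le_pi x⟩
  have hlt : ∀ x ∈ Set.Ioc (-1:ℝ) 1, Real.arccos x < Real.pi := by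
    intro x hx
    rcases eq_or_lt_of_le (Real.arccos_le_pi x) with h | h
    · exfalso
      have := Real.cos_arccos (by linarith [hx.1]) hx.2
      rw [h, Real.cos_pi] at this
      linarith [hx.1]
    · exact h
  have hmono : StrictMonoOn (fun x => x + AT x) (Set.Ioc (-1 : ℝ) 1) := by
    intro x hx y hy hxy
    simp only
    rw [f_eq x hx, f_eq y hy]
    have harc : Real.arccos y < Real.arccos x :=
      Real.strictAntiOn_arccos ⟨hx.1.le, hx.2⟩ ⟨by linarith [hy.1], hy.2⟩ hxy
    exact ggAnti (hmem y hy) (hmem x hx) harc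
  refine ⟨hmono, ?_, hmono.injOn, ?_⟩
  · -- MapsTo
    intro x hx
    show -1 < x + AT x ∧ x + AT x ≤ 1
    rw [f_eq x hx]
    constructor
    · rw [← gg_pi]
      exact ggAnti (hmem x hx) (Set.right_mem_Icc.2 Real.pi_pos.le) (hlt x hx)
    · rcases eq_or_lt_of_le (Real.arccos_nonneg x) with h | h
      · rw [← h, gg_zero]
      · rw [← gg_zero]
        exact (ggAnti (Set.left_mem_Icc.2 Real.pi_pos.le) (hmem x hx) h).le
  · -- SurjOn
    intro y hy
    have hy' : y ∈ Set.Icc (gg Real.pi) (gg 0) := by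
      rw [gg_pi, gg_zero]
      exact ⟨hy.1.le, hy.2⟩
    obtain ⟨θ, hθ, hθy⟩ := intermediate_value_Icc' Real.pi_pos.le ggCont hy'
    have hθπ : θ < Real.pi := by
      rcases eq_or_lt_of_le hθ.2 with h | h
      · exfalso
        rw [h, gg_pi] at hθy
        rw [← hθy] at hy
        exact lt_irrefl _ hy.1
      · exact h
    refine ⟨Real.cos θ, ⟨?_, Real.cos_le_one θ⟩, ?_⟩
    · calc (-1:ℝ) = Real.cos Real.pi := Real.cos_pi.symm
        _ < Real.cos θ := Real.strictAntiOn_cos hθ (Set.right_mem_Icc.2 Real.pi_pos.le) hθπ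
    · have hmem' : Real.cos θ ∈ Set.Ioc (-1:ℝ) 1 := by
        constructor
        · calc (-1:ℝ) = Real.cos Real.pi := Real.cos_pi.symm
            _ < Real.cos θ := Real.strictAntiOn_cos hθ (Set.right_mem_Icc.2 Real.pi_pos.le) hθπ
        · exact Real.cos_le_one θ
      show Real.cos θ + AT (Real.cos θ) = y
      rw [f_eq _ hmem', Real.arccos_cos hθ.1 hθ.2, hθy]
end

section
/- Let A be a real 2×2 matrix whose spectrum (as a complex matrix) is disjoint from (−∞, 0]. Then det A > 0, tr A / (2√(det A)) > −1, and log A = (log det A)/2 · I + (AC(tr A/(2√det A))/√det A) · (A − (tr A)/2 · I), where log A is the principal logarithm. -/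
open NormedSpace
open scoped Nat

abbrev Mat' := Matrix (Fin 2) (Fin 2) ℝ

lemma spec_iff' (M : Mat') (z : ℂ) :
    z ∈ spectrum ℂ (M.map (fun x => (x : ℂ))) ↔
      z ^ 2 - (M.trace : ℂ) * z + (M.det : ℂ) = 0 := by
  rw [spectrum.mem_iff, Matrix.isUnit_iff_isUnit_det, isUnit_iff_ne_zero, not_not]
  constructor <;> intro hd <;> rw [← hd] <;>
    simp [Matrix.det_fin_two, Matrix.trace_fin_two, Matrix.map_apply,
      Matrix.algebraMap_matrix_apply, Matrix.sub_apply] <;> ring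

lemma CH' (A : Mat') :
    (A - (A.trace / 2) • 1) * (A - (A.trace / 2) • 1) = ((A.trace / 2) ^ 2 - A.det) • 1 := by
  ext i j
  fin_cases i <;> fin_cases j <;>
    simp [Matrix.mul_apply, Fin.sum_univ_two, Matrix.trace_fin_two, Matrix.det_fin_two,
      Matrix.sub_apply, Matrix.smul_apply, Matrix.one_apply, smul_eq_mul] <;> ring

lemma detL' (A : Mat') (α γ : ℝ) :
    (α • 1 + γ • (A - (A.trace / 2) • 1)).det = α ^ 2 - γ ^ 2 * ((A.trace / 2) ^ 2 - A.det) := by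
  simp [Matrix.det_fin_two, Matrix.trace_fin_two, Matrix.add_apply, Matrix.sub_apply,
    Matrix.smul_apply, Matrix.one_apply, smul_eq_mul]
  ring

lemma trL' (A : Mat') (α γ : ℝ) :
    (α • 1 + γ • (A - (A.trace / 2) • 1)).trace = 2 * α := by
  simp [Matrix.trace_fin_two, Matrix.add_apply, Matrix.sub_apply,
    Matrix.smul_apply, Matrix.one_apply, smul_eq_mul]
  ring

lemma exp_smul_one' (α : ℝ) : exp (α • (1 : Mat')) = Real.exp α • 1 := by
  rw [exp_eq_tsum ℝ]
  refine HasSum.tsum_eq ?_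
  have h := (NormedSpace.expSeries_div_hasSum_exp α).smul_const (1 : Mat')
  rw [← Real.exp_eq_exp_ℝ] at h
  convert h using 2 with n
  · rfl
  rw [smul_pow, one_pow, smul_smul, div_eq_inv_mul]

lemma exp_split' (C : Mat') (α : ℝ) :
    exp (α • (1 : Mat') + C) = Real.exp α • exp C := by
  rw [Matrix.exp_add_of_commute _ _ ((Commute.one_left C).smul_left α),
    exp_smul_one', smul_mul_assoc, one_mul]

lemma exp_sq_scalar' (B : Mat') (Δ e o : ℝ) (hB : B * B = Δ • 1)
    (he : HasSum (fun k : ℕ => Δ ^ k / (2 * k)!) e)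
    (ho : HasSum (fun k : ℕ => Δ ^ k / (2 * k + 1)!) o) :
    exp B = e • 1 + o • B := by
  rw [exp_eq_tsum ℝ]
  refine HasSum.tsum_eq ?_
  have hpow : ∀ k : ℕ, B ^ (2 * k) = Δ ^ k • (1 : Mat') := by
    intro k
    rw [pow_mul, pow_two, hB, smul_pow, one_pow]
  refine HasSum.even_add_odd ?_ ?_
  · have := he.smul_const (1 : Mat')
    convert this using 2 with k
    · rfl
    rw [hpow, smul_smul, div_eq_inv_mul]
  · have := ho.smul_const B
    convert this using 2 with k
    · rfl
    rw [pow_succ, hpow, smul_mul_assoc, one_mul, smul_smul, div_eq_inv_mul]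

lemma casePack (s x γ : ℝ) (hs0 : 0 < s) (hγ : γ = AC x / s) (hx1 : -1 < x) (Δ : ℝ)
    (hΔeq : Δ = (x ^ 2 - 1) * s ^ 2) :
    ∃ e o : ℝ, HasSum (fun k : ℕ => (γ ^ 2 * Δ) ^ k / (2 * k)!) e ∧
      HasSum (fun k : ℕ => (γ ^ 2 * Δ) ^ k / (2 * k + 1)!) o ∧
      s * e = x * s ∧ s * (o * γ) = 1 ∧
      (0 ≤ γ ^ 2 * Δ ∨ ∃ θ, 0 < θ ∧ θ < Real.pi ∧ γ ^ 2 * Δ = -θ ^ 2) := by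
  rcases lt_trichotomy x 1 with hx | hx | hx
  · set θ := Real.arccos x with hθ
    have hθ0 : 0 < θ := Real.arccos_pos.mpr hx
    have hθπ : θ < Real.pi :=
      lt_of_le_of_ne (Real.arccos_le_pi x) (fun hc => by
        have := Real.arccos_eq_pi.mp hc; linarith)
    have h1x : (0:ℝ) < 1 - x ^ 2 := by nlinarith
    set w := Real.sqrt (1 - x ^ 2) with hwdef
    have hw2 : w ^ 2 = 1 - x ^ 2 := Real.sq_sqrt h1x.le
    have hw0 : 0 < w := Real.sqrt_pos.mpr h1x
    have hAC : AC x = θ / w := by rw [AC, if_pos hx]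
    have hu : γ ^ 2 * Δ = -θ ^ 2 := by
      rw [hγ, hAC, hΔeq]
      field_simp
      linear_combination hw2
    refine ⟨Real.cos θ, Real.sin θ / θ, ?_, ?_, ?_, ?_, Or.inr ⟨θ, hθ0, hθπ, hu⟩⟩
    · rw [hu]
      convert Real.hasSum_cos θ using 2 with k
      rw [neg_pow, pow_mul]
    · rw [hu]
      have hf : (fun k : ℕ => (-θ ^ 2) ^ k / ((2 * k + 1)! : ℝ)) =
          fun k : ℕ => (-1) ^ k * θ ^ (2 * k + 1) / ((2 * k + 1)! : ℝ) / θ := by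
        funext k
        rw [neg_pow, show θ ^ (2 * k + 1) = (θ ^ 2) ^ k * θ from by rw [pow_succ, pow_mul]]
        field_simp
      rw [hf]; exact (Real.hasSum_sin θ).div_const θ
    · rw [Real.cos_arccos hx1.le hx.le]; ring
    · rw [Real.sin_arccos, ← hwdef, hγ, hAC]
      field_simp
  · subst hx
    have hAC : AC 1 = 1 := by rw [AC, if_neg (lt_irrefl 1), if_pos rfl]
    have hu : γ ^ 2 * Δ = 0 := by rw [hΔeq]; ring
    refine ⟨1, 1, ?_, ?_, by ring, ?_, Or.inl (le_of_eq hu.symm)⟩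
    · rw [hu]
      have h0 := hasSum_single (f := fun k : ℕ => (0:ℝ) ^ k / (2 * k)!) 0
        (by intro b hb; simp [zero_pow hb])
      simpa using h0
    · rw [hu]
      have h0 := hasSum_single (f := fun k : ℕ => (0:ℝ) ^ k / (2 * k + 1)!) 0
        (by intro b hb; simp [zero_pow hb])
      simpa using h0
    · rw [hγ, hAC]
      field_simp
  · have hx21 : (0:ℝ) < x ^ 2 - 1 := by nlinarith
    set w := Real.sqrt (x ^ 2 - 1) with hwdef
    have hw2 : w ^ 2 = x ^ 2 - 1 := Real.sq_sqrt hx21.le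
    have hw0 : 0 < w := Real.sqrt_pos.mpr hx21
    set ph := arcosh x with hphdef
    have hy1 : 1 < x + w := by linarith
    have hph0 : 0 < ph := by rw [hphdef, arcosh]; exact Real.log_pos hy1
    have hexpph : Real.exp ph = x + w := by
      rw [hphdef, arcosh]; exact Real.exp_log (by linarith)
    have hyinv : (x + w)⁻¹ = x - w :=
      inv_eq_of_mul_eq_one_right (by linear_combination -hw2)
    have hcosh : Real.cosh ph = x := by
      rw [Real.cosh_eq, Real.exp_neg, hexpph, hyinv]; ring
    have hsinh : Real.sinh ph = w := by
      rw [Real.sinh_eq, Real.exp_neg, hexpph, hyinv]; ring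
    have hAC : AC x = ph / w := by
      rw [AC, if_neg (not_lt.mpr hx.le), if_neg (ne_of_gt hx)]
    have hu : γ ^ 2 * Δ = ph ^ 2 := by
      rw [hγ, hAC, hΔeq]
      field_simp
      linear_combination -hw2
    refine ⟨x, Real.sinh ph / ph, ?_, ?_, by ring, ?_, Or.inl (by rw [hu]; positivity)⟩
    · rw [hu, ← hcosh]
      convert Real.hasSum_cosh ph using 2 with k
      rw [pow_mul]
    · rw [hu]
      have hf : (fun k : ℕ => (ph ^ 2) ^ k / ((2 * k + 1)! : ℝ)) =
          fun k : ℕ => ph ^ (2 * k + 1) / ((2 * k + 1)! : ℝ) / ph := by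
        funext k
        rw [show ph ^ (2 * k + 1) = (ph ^ 2) ^ k * ph from by rw [pow_succ, pow_mul]]
        field_simp
      rw [hf]; exact (Real.hasSum_sinh ph).div_const ph
    · rw [hsinh, hγ, hAC]
      field_simp

theorem stmt8 (A : Matrix (Fin 2) (Fin 2) ℝ) (h : LogAble A) :
    0 < A.det ∧
    -1 < A.trace / (2 * Real.sqrt A.det) ∧
    IsPrincipalLog A
      ((Real.log A.det / 2) • (1 : Matrix (Fin 2) (Fin 2) ℝ) +
        (AC (A.trace / (2 * Real.sqrt A.det)) / Real.sqrt A.det) •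
          (A - (A.trace / 2) • (1 : Matrix (Fin 2) (Fin 2) ℝ))) := by
  have hπ := Real.pi_pos
  -- Step 1: positivity of the determinant
  have key : 0 < A.det ∧ (0 ≤ (A.trace / 2) ^ 2 - A.det → 0 < A.trace / 2) := by
    by_cases hΔ : 0 ≤ (A.trace / 2) ^ 2 - A.det
    · set r := Real.sqrt ((A.trace / 2) ^ 2 - A.det) with hr
      have hr2 : r ^ 2 = (A.trace / 2) ^ 2 - A.det := Real.sq_sqrt hΔ
      have hr0 : 0 ≤ r := Real.sqrt_nonneg _
      have hmem : ((A.trace / 2 - r : ℝ) : ℂ) ∈ spectrum ℂ (A.map (fun x => (x : ℂ))) := by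
        rw [spec_iff']
        have : (A.trace / 2 - r) ^ 2 - A.trace * (A.trace / 2 - r) + A.det = 0 := by
          linear_combination hr2
        exact_mod_cast congrArg (fun x : ℝ => (x : ℂ)) this
      have := h _ hmem
      simp only [Complex.ofReal_im, Complex.ofReal_re, not_and, not_le] at this
      have hmr : 0 < A.trace / 2 - r := by simpa using this
      constructor
      · nlinarith
      · intro _; nlinarith
    · constructor
      · nlinarith [sq_nonneg (A.trace / 2)]
      · intro hc; exact absurd hc hΔ
  obtain ⟨hd, hm⟩ := key
  set s := Real.sqrt A.det with hsdef
  have hs0 : 0 < s := Real.sqrt_pos.mpr hd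
  have hs2 : s ^ 2 = A.det := Real.sq_sqrt hd.le
  set x := A.trace / (2 * s) with hxdef
  have hxs : x * s = A.trace / 2 := by
    rw [hxdef]; field_simp
  have hΔeq : (A.trace / 2) ^ 2 - A.det = (x ^ 2 - 1) * s ^ 2 := by
    rw [← hxs, ← hs2]; ring
  have hx1 : -1 < x := by
    by_cases hc : 0 ≤ (A.trace / 2) ^ 2 - A.det
    · have hm0 := hm hc
      have : 0 < x := by
        rw [hxdef]
        exact div_pos (by linarith) (by linarith)
      linarith
    · push_neg at hc
      rw [hΔeq] at hc
      have hs2p : (0:ℝ) < s ^ 2 := by positivity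
      nlinarith [sq_nonneg (x + 1), sq_nonneg (x - 1)]
  set α := Real.log A.det / 2 with hαdef
  set γ := AC x / s with hγdef
  set B := A - (A.trace / 2) • (1 : Matrix (Fin 2) (Fin 2) ℝ) with hBdef
  have hexpα : Real.exp α = s := by
    rw [hαdef, ← Real.log_sqrt hd.le, Real.exp_log hs0]
  obtain ⟨e, o, he, ho, h1, h2, hucase⟩ :=
    casePack s x γ hs0 hγdef hx1 ((A.trace / 2) ^ 2 - A.det) hΔeq
  have h1' : s * e = A.trace / 2 := by rw [h1, hxs]
  have hCC : (γ • B) * (γ • B) = (γ ^ 2 * ((A.trace / 2) ^ 2 - A.det)) • (1 : Mat') := by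
    rw [smul_mul_smul_comm, hBdef, CH', smul_smul]
    congr 1
    ring
  refine ⟨hd, hx1, ?_, ?_⟩
  · -- exponential identity
    rw [exp_split', exp_sq_scalar' (γ • B) (γ ^ 2 * ((A.trace / 2) ^ 2 - A.det)) e o hCC he ho,
      hexpα, smul_add, smul_smul s e, smul_smul o γ, smul_smul s (o * γ), h1', h2, one_smul,
      hBdef]
    abel
  · -- spectrum of the logarithm
    intro z hz
    rw [spec_iff'] at hz
    rw [hBdef, trL', detL'] at hz
    push_cast at hz
    have hw2 : (z - (α : ℂ)) ^ 2 = ((γ ^ 2 * ((A.trace / 2) ^ 2 - A.det) : ℝ) : ℂ) := by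
      push_cast
      linear_combination hz
    rcases hucase with hu | ⟨θ, hθ0, hθπ, hu⟩
    · set r := Real.sqrt (γ ^ 2 * ((A.trace / 2) ^ 2 - A.det)) with hrdef
      have hr2C : ((r : ℝ) : ℂ) ^ 2 = ((γ ^ 2 * ((A.trace / 2) ^ 2 - A.det) : ℝ) : ℂ) := by
        exact_mod_cast congrArg (fun y : ℝ => (y : ℂ)) (Real.sq_sqrt hu)
      have hfac : (z - α - r) * (z - α + r) = 0 := by
        linear_combination hw2 - hr2C
      rcases mul_eq_zero.mp hfac with h' | h'
      · have hz' : z = ((α + r : ℝ) : ℂ) := by push_cast; linear_combination h'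
        rw [hz']
        simp only [Complex.ofReal_im, Set.mem_Ioo]
        exact ⟨by linarith, hπ⟩
      · have hz' : z = ((α - r : ℝ) : ℂ) := by push_cast; linear_combination h'
        rw [hz']
        simp only [Complex.ofReal_im, Set.mem_Ioo]
        exact ⟨by linarith, hπ⟩
    · have hθC : ((θ : ℝ) : ℂ) ^ 2 = -((γ ^ 2 * ((A.trace / 2) ^ 2 - A.det) : ℝ) : ℂ) := by
        have : θ ^ 2 = -(γ ^ 2 * ((A.trace / 2) ^ 2 - A.det)) := by linarith [hu]
        exact_mod_cast congrArg (fun y : ℝ => (y : ℂ)) this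
      have hfac : (z - α - θ * Complex.I) * (z - α + θ * Complex.I) = 0 := by
        linear_combination hw2 + (-Complex.I ^ 2) * hθC +
          ((γ ^ 2 * ((A.trace / 2) ^ 2 - A.det) : ℝ) : ℂ) * Complex.I_sq
      rcases mul_eq_zero.mp hfac with h' | h'
      · have hz' : z = (α : ℂ) + (θ : ℂ) * Complex.I := by linear_combination h'
        rw [hz']
        simp only [Complex.add_im, Complex.ofReal_im, Complex.mul_im, Complex.ofReal_re,
          Complex.I_im, Complex.I_re, Set.mem_Ioo, mul_zero, mul_one, zero_add]
        exact ⟨by linarith, by linarith⟩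
      · have hz' : z = (α : ℂ) - (θ : ℂ) * Complex.I := by linear_combination h'
        rw [hz']
        simp only [Complex.sub_im, Complex.ofReal_im, Complex.mul_im, Complex.ofReal_re,
          Complex.I_im, Complex.I_re, Set.mem_Ioo, mul_zero, mul_one, zero_sub]
        exact ⟨by linarith, by linarith⟩
end

section
/- For any real numbers a, b, r with b ≥ 0, r ≥ 0 and the disk D̄(a+bi, r) disjoint from (−∞,0] (i.e. a²+b²>r² and, if b≤r, a>√(r²−b²) or the disk avoids the negative axis), let A be a log-able real 2×2 matrix with principal disk D̄(a+bi,r). Then ‖log A‖₂ = f_CA(a,b,r) + f_RD(a,b,r) and ⌊log A⌋₂ = f_CA(a,b,r) − f_RD(a,b,r), where, with s = √(a²+b²−r²), f_CA(a,b,r) = √((log s)² + (b·AC(a/s)/s)²) and f_RD(a,b,r) = r·AC(a/s)/s. -/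
section Helpers

lemma quad_bound (p q u v P Q x0 x1 : ℝ) (hP0 : 0 ≤ P) (hQ0 : 0 ≤ Q)
    (hP2 : P^2 = p^2+q^2) (hQ2 : Q^2 = u^2+v^2) :
    ((p+u)*x0 + (v-q)*x1)^2 + ((q+v)*x0 + (p-u)*x1)^2 ≤ (P+Q)^2 * (x0^2+x1^2) := by
  have hPQ2 : (P*Q)^2 = (p*u+q*v)^2 + (q*u-p*v)^2 := by rw [mul_pow, hP2, hQ2]; ring
  have hE2 : ((p*u+q*v)*(x0^2-x1^2) - (q*u-p*v)*(2*x0*x1))^2 ≤ (P*Q)^2*(x0^2+x1^2)^2 := by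
    nlinarith [sq_nonneg ((p*u+q*v)*(2*x0*x1) + (q*u-p*v)*(x0^2-x1^2))]
  have hPQ0 : 0 ≤ P*Q := mul_nonneg hP0 hQ0
  have hZ0 : 0 ≤ P*Q*(x0^2+x1^2) := mul_nonneg hPQ0 (by positivity)
  have hE : (p*u+q*v)*(x0^2-x1^2) - (q*u-p*v)*(2*x0*x1) ≤ P*Q*(x0^2+x1^2) := by
    nlinarith [hE2, hZ0]
  nlinarith [hE, hP2, hQ2]

lemma exists_unit (X Y PQ : ℝ) (hPQ0 : 0 ≤ PQ) (h : X^2 + Y^2 = PQ^2) :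
    ∃ x0 x1 : ℝ, x0^2+x1^2 = 1 ∧ X*(x0^2-x1^2) - Y*(2*x0*x1) = PQ := by
  by_cases hz : X = 0 ∧ Y = 0
  · refine ⟨1, 0, by norm_num, ?_⟩
    have h2 : PQ^2 = 0 := by rw [← h, hz.1, hz.2]; ring
    have : PQ = 0 := by nlinarith
    simp [hz.1, hz.2, this]
  · set ζ : ℂ := X + Y * Complex.I with hζ
    have hre : ζ.re = X := by simp [hζ]
    have him : ζ.im = Y := by simp [hζ]
    have hζne : ζ ≠ 0 := by
      intro hc
      rw [Complex.ext_iff] at hc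
      exact hz ⟨by rw [← hre]; simpa using hc.1, by rw [← him]; simpa using hc.2⟩
    have habs : ‖ζ‖ = PQ := by
      rw [Complex.norm_def, Complex.normSq_apply, hre, him]
      rw [show X*X + Y*Y = PQ^2 by rw [← h]; ring]
      exact Real.sqrt_sq hPQ0
    set w := (starRingEnd ℂ) ζ with hw
    set x : ℂ := Complex.exp ((w.arg / 2 : ℝ) * Complex.I) with hx
    have hx2 : x^2 = w / ‖w‖ := by
      rw [hx, ← Complex.exp_nat_mul]
      have : (2:ℂ) * ((w.arg/2 : ℝ) * Complex.I) = (w.arg : ℝ) * Complex.I := by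
        push_cast; ring
      rw [show ((2:ℕ):ℂ) = (2:ℂ) by norm_num, this]
      have h3 := Complex.norm_mul_exp_arg_mul_I w
      rw [eq_div_iff (by exact_mod_cast (norm_ne_zero_iff.mpr (by simp [hw]; exact hζne)))]
      rw [mul_comm]
      exact h3
    have hwabs : ‖w‖ = PQ := by rw [hw, Complex.norm_conj, habs]
    have hPQne : PQ ≠ 0 := by
      intro h0; rw [h0] at habs; exact hζne (norm_eq_zero.mp habs)
    have hmul : ζ * x^2 = (PQ : ℂ) := by
      rw [hx2, hwabs, hw, mul_div_assoc']
      rw [Complex.mul_conj]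
      rw [Complex.normSq_eq_norm_sq, habs]
      rw [div_eq_iff (by exact_mod_cast hPQne)]
      push_cast
      ring
    have hxabs : ‖x‖ = 1 := Complex.norm_exp_ofReal_mul_I _
    refine ⟨x.re, x.im, ?_, ?_⟩
    · have h2 : Complex.normSq x = 1 := by
        rw [Complex.normSq_eq_norm_sq, hxabs]; norm_num
      rw [Complex.normSq_apply] at h2
      nlinarith [h2]
    · have hre2 : (ζ * x^2).re = PQ := by rw [hmul]; simp
      rw [pow_two, Complex.mul_re, Complex.mul_re, Complex.mul_im, hre, him] at hre2
      nlinarith [hre2]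

lemma euclidean_norm_two (x : EuclideanSpace ℝ (Fin 2)) :
    ‖x‖ = Real.sqrt (x 0 ^2 + x 1 ^2) := by
  rw [EuclideanSpace.norm_eq]
  simp [Fin.sum_univ_two, Real.norm_eq_abs, sq_abs]

lemma clm_apply_coord (M : Matrix (Fin 2) (Fin 2) ℝ) (y : Fin 2 → ℝ) (i : Fin 2) :
    (Matrix.toEuclideanCLM (𝕜 := ℝ) (n := Fin 2) M ((WithLp.equiv 2 _).symm y)) i
      = M i 0 * y 0 + M i 1 * y 1 := by
  show M.mulVec y i = _
  rw [Matrix.mulVec, dotProduct, Fin.sum_univ_two]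

lemma opNorm_eq (M : Matrix (Fin 2) (Fin 2) ℝ) :
    opNorm M = Real.sqrt (((M 0 0 + M 1 1)/2)^2 + ((M 1 0 - M 0 1)/2)^2)
      + Real.sqrt (((M 0 0 - M 1 1)/2)^2 + ((M 0 1 + M 1 0)/2)^2) := by
  set p := (M 0 0 + M 1 1)/2 with hp
  set q := (M 1 0 - M 0 1)/2 with hq
  set u := (M 0 0 - M 1 1)/2 with hu
  set v := (M 0 1 + M 1 0)/2 with hv
  set P := Real.sqrt (p^2+q^2) with hP
  set Q := Real.sqrt (u^2+v^2) with hQ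
  have hP0 : 0 ≤ P := Real.sqrt_nonneg _
  have hQ0 : 0 ≤ Q := Real.sqrt_nonneg _
  have hP2 : P^2 = p^2+q^2 := Real.sq_sqrt (by positivity)
  have hQ2 : Q^2 = u^2+v^2 := Real.sq_sqrt (by positivity)
  have hM00 : M 0 0 = p + u := by rw [hp, hu]; ring
  have hM01 : M 0 1 = v - q := by rw [hv, hq]; ring
  have hM10 : M 1 0 = q + v := by rw [hq, hv]; ring
  have hM11 : M 1 1 = p - u := by rw [hp, hu]; ring
  have key : ∀ y : Fin 2 → ℝ,
      ‖Matrix.toEuclideanCLM (𝕜 := ℝ) (n := Fin 2) M ((WithLp.equiv 2 _).symm y)‖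
        = Real.sqrt (((p+u)*(y 0) + (v-q)*(y 1))^2 + (((q+v)*(y 0) + (p-u)*(y 1)))^2) := by
    intro y
    rw [euclidean_norm_two, clm_apply_coord, clm_apply_coord, hM00, hM01, hM10, hM11]
  have key' : ∀ x : EuclideanSpace ℝ (Fin 2),
      ‖Matrix.toEuclideanCLM (𝕜 := ℝ) (n := Fin 2) M x‖
        = Real.sqrt (((p+u)*(x 0) + (v-q)*(x 1))^2 + (((q+v)*(x 0) + (p-u)*(x 1)))^2) :=
    fun x => key (fun i => x i)
  apply le_antisymm
  · apply ContinuousLinearMap.opNorm_le_bound _ (by positivity)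
    intro x
    rw [key', euclidean_norm_two]
    have hb := quad_bound p q u v P Q (x 0) (x 1) hP0 hQ0 hP2 hQ2
    calc Real.sqrt (((p+u)*(x 0) + (v-q)*(x 1))^2 + (((q+v)*(x 0) + (p-u)*(x 1)))^2)
        ≤ Real.sqrt ((P+Q)^2 * ((x 0)^2 + (x 1)^2)) := Real.sqrt_le_sqrt hb
      _ = (P+Q) * Real.sqrt ((x 0)^2 + (x 1)^2) := by
          rw [Real.sqrt_mul (by positivity), Real.sqrt_sq (by positivity)]
  · obtain ⟨x0, x1, hx1, hE⟩ := exists_unit (p*u+q*v) (q*u-p*v) (P*Q)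
      (mul_nonneg hP0 hQ0) (by rw [mul_pow, hP2, hQ2]; ring)
    have hnx : ‖(WithLp.equiv 2 (Fin 2 → ℝ)).symm ![x0, x1]‖ = 1 := by
      rw [euclidean_norm_two]
      show Real.sqrt ((![x0,x1] 0)^2 + (![x0,x1] 1)^2) = 1
      simp only [Matrix.cons_val_zero, Matrix.cons_val_one, Matrix.head_cons]
      rw [hx1, Real.sqrt_one]
    have hMx : ‖Matrix.toEuclideanCLM (𝕜 := ℝ) (n := Fin 2) M
        ((WithLp.equiv 2 (Fin 2 → ℝ)).symm ![x0, x1])‖ = P + Q := by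
      rw [key]
      simp only [Matrix.cons_val_zero, Matrix.cons_val_one, Matrix.head_cons]
      rw [show ((p+u)*x0 + (v-q)*x1)^2 + (((q+v)*x0 + (p-u)*x1))^2 = (P+Q)^2 by
        linear_combination (p^2+q^2+u^2+v^2)*hx1 + 2*hE - hP2 - hQ2]
      exact Real.sqrt_sq (by positivity)
    have hle := (Matrix.toEuclideanCLM (𝕜 := ℝ) (n := Fin 2) M).le_opNorm
      ((WithLp.equiv 2 (Fin 2 → ℝ)).symm ![x0, x1])
    rw [hMx, hnx, mul_one] at hle
    exact hle

lemma conorm_eq (M : Matrix (Fin 2) (Fin 2) ℝ) :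
    conorm M = Real.sqrt (((M 0 0 + M 1 1)/2)^2 + ((M 1 0 - M 0 1)/2)^2)
      - Real.sqrt (((M 0 0 - M 1 1)/2)^2 + ((M 0 1 + M 1 0)/2)^2) := by
  set p := (M 0 0 + M 1 1)/2 with hp
  set q := (M 1 0 - M 0 1)/2 with hq
  set u := (M 0 0 - M 1 1)/2 with hu
  set v := (M 0 1 + M 1 0)/2 with hv
  set C := Real.sqrt (p^2+q^2) with hC
  set R := Real.sqrt (u^2+v^2) with hR
  have hC0 : 0 ≤ C := Real.sqrt_nonneg _
  have hR0 : 0 ≤ R := Real.sqrt_nonneg _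
  have hC2 : C^2 = p^2+q^2 := Real.sq_sqrt (by positivity)
  have hR2 : R^2 = u^2+v^2 := Real.sq_sqrt (by positivity)
  have hdet : M.det = C^2 - R^2 := by
    rw [Matrix.det_fin_two, hC2, hR2, hp, hq, hu, hv]; ring
  by_cases h0 : M.det = 0
  · have hsq : C^2 = R^2 := by rw [hdet] at h0; linarith
    have hCR : C = R := by
      rw [← Real.sqrt_sq hC0, ← Real.sqrt_sq hR0, hsq]
    rw [conorm, h0, Real.sign_zero, zero_mul, hCR, sub_self]
  · have hd : M⁻¹ = M.det⁻¹ • M.adjugate := by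
      rw [Matrix.inv_def, Ring.inverse_eq_inv']
    have hadj : M.adjugate = Matrix.of ![![M 1 1, -(M 0 1)], ![-(M 1 0), M 0 0]] :=
      Matrix.adjugate_fin_two M
    have e00 : M⁻¹ 0 0 = M.det⁻¹ * M 1 1 := by rw [hd, hadj]; simp
    have e01 : M⁻¹ 0 1 = M.det⁻¹ * -(M 0 1) := by rw [hd, hadj]; simp
    have e10 : M⁻¹ 1 0 = M.det⁻¹ * -(M 1 0) := by rw [hd, hadj]; simp
    have e11 : M⁻¹ 1 1 = M.det⁻¹ * M 0 0 := by rw [hd, hadj]; simp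
    have hCRpos : 0 < C + R := by
      rcases lt_or_eq_of_le (by positivity : (0:ℝ) ≤ C + R) with h | h
      · exact h
      · exfalso; apply h0
        have hC' : C = 0 := by linarith
        have hR' : R = 0 := by linarith
        rw [hdet, hC', hR']; ring
    have hop : opNorm M⁻¹ = |M.det⁻¹| * (C + R) := by
      rw [opNorm_eq, e00, e01, e10, e11]
      have h1 : ((M.det⁻¹ * M 1 1 + M.det⁻¹ * M 0 0)/2)^2
          + ((M.det⁻¹ * -(M 1 0) - M.det⁻¹ * -(M 0 1))/2)^2 = (M.det⁻¹)^2 * (p^2 + q^2) := by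
        rw [hp, hq]; ring
      have h2 : ((M.det⁻¹ * M 1 1 - M.det⁻¹ * M 0 0)/2)^2
          + ((M.det⁻¹ * -(M 0 1) + M.det⁻¹ * -(M 1 0))/2)^2 = (M.det⁻¹)^2 * (u^2 + v^2) := by
        rw [hu, hv]; ring
      rw [h1, h2, Real.sqrt_mul (sq_nonneg _), Real.sqrt_mul (sq_nonneg _),
        Real.sqrt_sq_eq_abs, ← hC, ← hR]
      ring
    have habsdet : |M.det| = |C - R| * (C + R) := by
      rw [hdet, show C^2 - R^2 = (C-R)*(C+R) by ring, abs_mul, abs_of_pos hCRpos]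
    rw [conorm, hop, abs_inv, mul_inv, inv_inv, habsdet]
    rw [show |C-R| * (C+R) * (C+R)⁻¹ = |C-R| by field_simp]
    rcases lt_trichotomy M.det 0 with h | h | h
    · rw [Real.sign_of_neg h]
      have : C - R < 0 := by nlinarith [hdet, h]
      rw [abs_of_neg this]; ring
    · exact absurd h h0
    · rw [Real.sign_of_pos h]
      have : 0 < C - R := by nlinarith [hdet, h]
      rw [abs_of_pos this]; ring

lemma spec_fin_two (M : Matrix (Fin 2) (Fin 2) ℂ) (c₁ c₂ : ℂ)
    (h1 : c₁ + c₂ = M 0 0 + M 1 1) (h2 : c₁ * c₂ = M.det) :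
    spectrum ℂ M = {c₁, c₂} := by
  ext w
  rw [spectrum.mem_iff, Matrix.isUnit_iff_isUnit_det]
  have e : (algebraMap ℂ (Matrix (Fin 2) (Fin 2) ℂ)) w - M
      = !![w - M 0 0, -M 0 1; -M 1 0, w - M 1 1] := by
    ext i j
    fin_cases i <;> fin_cases j <;>
      simp [Matrix.algebraMap_matrix_apply]
  rw [e, Matrix.det_fin_two_of]
  rw [Matrix.det_fin_two] at h2
  have hdet : (w - M 0 0) * (w - M 1 1) - -M 0 1 * -M 1 0 = (w - c₁) * (w - c₂) := by
    linear_combination w * h1 - h2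
  rw [hdet, isUnit_iff_ne_zero, not_ne_iff, mul_eq_zero, sub_eq_zero, sub_eq_zero]
  simp [Set.mem_insert_iff]

lemma exp_map_complex (L : Matrix (Fin 2) (Fin 2) ℝ) :
    (NormedSpace.exp L).map (fun x => (x:ℂ)) = NormedSpace.exp (L.map (fun x => (x:ℂ))) := by
  letI : SeminormedRing (Matrix (Fin 2) (Fin 2) ℝ) := Matrix.linftyOpSemiNormedRing
  letI : NormedRing (Matrix (Fin 2) (Fin 2) ℝ) := Matrix.linftyOpNormedRing
  letI : NormedAlgebra ℝ (Matrix (Fin 2) (Fin 2) ℝ) := Matrix.linftyOpNormedAlgebra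
  letI : SeminormedRing (Matrix (Fin 2) (Fin 2) ℂ) := Matrix.linftyOpSemiNormedRing
  letI : NormedRing (Matrix (Fin 2) (Fin 2) ℂ) := Matrix.linftyOpNormedRing
  letI : NormedAlgebra ℝ (Matrix (Fin 2) (Fin 2) ℂ) := Matrix.linftyOpNormedAlgebra
  have hcont : Continuous ((Complex.ofRealHom.mapMatrix :
      Matrix (Fin 2) (Fin 2) ℝ →+* Matrix (Fin 2) (Fin 2) ℂ)) :=
    Continuous.matrix_map continuous_id Complex.continuous_ofReal
  letI : NormedAlgebra ℚ (Matrix (Fin 2) (Fin 2) ℝ) := Matrix.linftyOpNormedAlgebra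
  letI : NormedAlgebra ℚ (Matrix (Fin 2) (Fin 2) ℂ) := Matrix.linftyOpNormedAlgebra
  have h1 := NormedSpace.map_exp (Complex.ofRealHom.mapMatrix :
      Matrix (Fin 2) (Fin 2) ℝ →+* Matrix (Fin 2) (Fin 2) ℂ) hcont L
  show Complex.ofRealHom.mapMatrix (NormedSpace.exp L)
      = NormedSpace.exp (Complex.ofRealHom.mapMatrix L)
  exact h1

lemma det_map_complex (M : Matrix (Fin 2) (Fin 2) ℝ) :
    (M.map (fun x => (x:ℂ))).det = ((M.det : ℝ) : ℂ) :=
  (RingHom.map_det Complex.ofRealHom M).symm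

lemma spec_exp_mem (A L : Matrix (Fin 2) (Fin 2) ℝ) (hexp : NormedSpace.exp L = A)
    {c : ℂ} (hc : c ∈ spectrum ℂ (L.map (fun x => (x:ℂ)))) :
    Complex.exp c ∈ spectrum ℂ (A.map (fun x => (x:ℂ))) := by
  letI : SeminormedRing (Matrix (Fin 2) (Fin 2) ℂ) := Matrix.linftyOpSemiNormedRing
  letI : NormedRing (Matrix (Fin 2) (Fin 2) ℂ) := Matrix.linftyOpNormedRing
  letI : NormedAlgebra ℂ (Matrix (Fin 2) (Fin 2) ℂ) := Matrix.linftyOpNormedAlgebra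
  have h := spectrum.exp_mem_exp (𝕜 := ℂ) (L.map (fun x => (x:ℂ))) hc
  rw [← hexp, exp_map_complex, Complex.exp_eq_exp_ℂ]
  exact h

lemma commute_exp (L : Matrix (Fin 2) (Fin 2) ℝ) :
    (NormedSpace.exp L) * L = L * (NormedSpace.exp L) := by
  letI : SeminormedRing (Matrix (Fin 2) (Fin 2) ℝ) := Matrix.linftyOpSemiNormedRing
  letI : NormedRing (Matrix (Fin 2) (Fin 2) ℝ) := Matrix.linftyOpNormedRing
  letI : NormedAlgebra ℝ (Matrix (Fin 2) (Fin 2) ℝ) := Matrix.linftyOpNormedAlgebra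
  exact ((Commute.refl L).exp_left).eq

lemma comm_aux (x y z x' y' z' : ℝ) (e1 : y * z' = z * y') (e2 : x * y' = y * x')
    (e3 : z * x' = x * z') (hne : ¬(x = 0 ∧ y = 0 ∧ z = 0)) :
    ∃ γ : ℝ, x' = γ * x ∧ y' = γ * y ∧ z' = γ * z := by
  by_cases hy : y ≠ 0
  · refine ⟨y'/y, ?_, by field_simp, ?_⟩
    · field_simp; linarith [e2]
    · field_simp; linarith [e1]
  · push_neg at hy
    by_cases hz : z ≠ 0
    · refine ⟨z'/z, ?_, ?_, by field_simp⟩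
      · field_simp; linarith [e3]
      · subst hy
        have h4 : y' * z = 0 := by linarith [e1]
        have hy' : y' = 0 := by
          rcases mul_eq_zero.mp h4 with h | h
          · exact h
          · exact absurd h hz
        simp [hy']
    · push_neg at hz
      have hx : x ≠ 0 := fun hx => hne ⟨hx, hy, hz⟩
      refine ⟨x'/x, by field_simp, ?_, ?_⟩
      · subst hy
        have h4 : x * y' = 0 := by linarith [e2]
        have : y' = 0 := by
          rcases mul_eq_zero.mp h4 with h | h
          · exact absurd h hx
          · exact h
        simp [this]
      · subst hz
        have h4 : x * z' = 0 := by linarith [e3]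
        have : z' = 0 := by
          rcases mul_eq_zero.mp h4 with h | h
          · exact absurd h hx
          · exact h
        simp [this]

lemma exp_nilpotent (N : Matrix (Fin 2) (Fin 2) ℝ) (hN : N * N = 0) :
    NormedSpace.exp N = 1 + N := by
  letI : SeminormedRing (Matrix (Fin 2) (Fin 2) ℝ) := Matrix.linftyOpSemiNormedRing
  letI : NormedRing (Matrix (Fin 2) (Fin 2) ℝ) := Matrix.linftyOpNormedRing
  letI : NormedAlgebra ℝ (Matrix (Fin 2) (Fin 2) ℝ) := Matrix.linftyOpNormedAlgebra
  rw [NormedSpace.exp_eq_tsum ℝ]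
  show (∑' (n:ℕ), (n.factorial : ℝ)⁻¹ • N ^ n) = 1 + N
  have hpow : ∀ n : ℕ, 2 ≤ n → N ^ n = 0 := by
    intro n hn
    obtain ⟨k, rfl⟩ := Nat.exists_eq_add_of_le hn
    rw [pow_add, pow_two, hN, zero_mul]
  have hsupp : ∀ n ∉ ({0, 1} : Finset ℕ), ((n.factorial : ℝ)⁻¹ • N ^ n) = 0 := by
    intro n hn
    simp only [Finset.mem_insert, Finset.mem_singleton] at hn
    push_neg at hn
    rw [hpow n (by omega), smul_zero]
  rw [tsum_eq_sum hsupp]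
  rw [Finset.sum_insert (by decide), Finset.sum_singleton]
  simp

lemma exp_scalar (c : ℝ) :
    NormedSpace.exp (Matrix.scalar (Fin 2) c) = Matrix.scalar (Fin 2) (Real.exp c) := by
  letI : SeminormedRing (Matrix (Fin 2) (Fin 2) ℝ) := Matrix.linftyOpSemiNormedRing
  letI : NormedRing (Matrix (Fin 2) (Fin 2) ℝ) := Matrix.linftyOpNormedRing
  letI : NormedAlgebra ℝ (Matrix (Fin 2) (Fin 2) ℝ) := Matrix.linftyOpNormedAlgebra
  letI : NormedAlgebra ℚ (Matrix (Fin 2) (Fin 2) ℝ) := Matrix.linftyOpNormedAlgebra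
  have h := NormedSpace.map_exp (algebraMap ℝ (Matrix (Fin 2) (Fin 2) ℝ))
    (continuous_algebraMap _ _) c
  rw [Real.exp_eq_exp_ℝ]
  have h2 : algebraMap ℝ (Matrix (Fin 2) (Fin 2) ℝ) = Matrix.scalar (Fin 2) := rfl
  rw [← h2]
  exact h.symm

lemma exp_scalar_add_nilpotent (c : ℝ) (N : Matrix (Fin 2) (Fin 2) ℝ) (hN : N * N = 0) :
    NormedSpace.exp (Matrix.scalar (Fin 2) c + N) = Real.exp c • (1 + N) := by
  letI : SeminormedRing (Matrix (Fin 2) (Fin 2) ℝ) := Matrix.linftyOpSemiNormedRing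
  letI : NormedRing (Matrix (Fin 2) (Fin 2) ℝ) := Matrix.linftyOpNormedRing
  letI : NormedAlgebra ℝ (Matrix (Fin 2) (Fin 2) ℝ) := Matrix.linftyOpNormedAlgebra
  letI : NormedAlgebra ℚ (Matrix (Fin 2) (Fin 2) ℝ) := Matrix.linftyOpNormedAlgebra
  have hcomm : Commute (Matrix.scalar (Fin 2) c) N :=
    Matrix.scalar_commute c (fun r => Commute.all c r) N
  rw [Matrix.exp_add_of_commute _ _ hcomm, exp_scalar, exp_nilpotent N hN]
  have h2 : Matrix.scalar (Fin 2) (Real.exp c)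
      = algebraMap ℝ (Matrix (Fin 2) (Fin 2) ℝ) (Real.exp c) := rfl
  rw [h2, ← Algebra.smul_def]

lemma L_decomp (L : Matrix (Fin 2) (Fin 2) ℝ) :
    L = Matrix.scalar (Fin 2) ((L 0 0 + L 1 1)/2)
      + Matrix.of ![![(L 0 0 - L 1 1)/2, L 0 1], ![L 1 0, -((L 0 0 - L 1 1)/2)]] := by
  ext i j
  fin_cases i <;> fin_cases j <;>
    simp [Matrix.scalar_apply, Matrix.one_apply] <;> ring

lemma nilsq (x' y' z' : ℝ) (h : x'^2 + y'*z' = 0) :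
    (Matrix.of ![![x', y'], ![z', -x']] : Matrix (Fin 2) (Fin 2) ℝ)
      * Matrix.of ![![x', y'], ![z', -x']] = 0 := by
  ext i j
  fin_cases i <;> fin_cases j <;>
    simp [Matrix.mul_apply, Fin.sum_univ_two] <;> nlinarith [h]

lemma scalar_L (L : Matrix (Fin 2) (Fin 2) ℝ) (h11 : L 1 1 = L 0 0) (h01 : L 0 1 = 0)
    (h10 : L 1 0 = 0) :
    NormedSpace.exp L = Matrix.scalar (Fin 2) (Real.exp (L 0 0)) := by
  have hL : L = Matrix.scalar (Fin 2) (L 0 0) := by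
    ext i j
    fin_cases i <;> fin_cases j <;> simp [Matrix.scalar_apply, h11, h01, h10]
  conv_lhs => rw [hL]
  rw [exp_scalar]

end Helpers

set_option maxHeartbeats 1600000
theorem stmt9 (a b r : ℝ) (hb : 0 ≤ b) (hr : 0 ≤ r)
    (hdisk : ∀ z ∈ Metric.closedBall ((a : ℂ) + (b : ℂ) * Complex.I) r,
      ¬(z.im = 0 ∧ z.re ≤ 0))
    (A L : Matrix (Fin 2) (Fin 2) ℝ) (hA : LogAble A)
    (hcenter : PDcenter A = (a : ℂ) + (b : ℂ) * Complex.I) (hradius : PDradius A = r)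
    (hL : IsPrincipalLog A L) :
    opNorm L =
      Real.sqrt ((Real.log (Real.sqrt (a ^ 2 + b ^ 2 - r ^ 2))) ^ 2 +
          (b * AC (a / Real.sqrt (a ^ 2 + b ^ 2 - r ^ 2)) /
            Real.sqrt (a ^ 2 + b ^ 2 - r ^ 2)) ^ 2) +
        r * AC (a / Real.sqrt (a ^ 2 + b ^ 2 - r ^ 2)) / Real.sqrt (a ^ 2 + b ^ 2 - r ^ 2) ∧
    conorm L =
      Real.sqrt ((Real.log (Real.sqrt (a ^ 2 + b ^ 2 - r ^ 2))) ^ 2 +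
          (b * AC (a / Real.sqrt (a ^ 2 + b ^ 2 - r ^ 2)) /
            Real.sqrt (a ^ 2 + b ^ 2 - r ^ 2)) ^ 2) -
        r * AC (a / Real.sqrt (a ^ 2 + b ^ 2 - r ^ 2)) / Real.sqrt (a ^ 2 + b ^ 2 - r ^ 2) := by
  obtain ⟨hexp, hstrip⟩ := hL
  set s := Real.sqrt (a ^ 2 + b ^ 2 - r ^ 2) with hs_def
  have hs2pos : 0 < a^2 + b^2 - r^2 := by
    by_contra hc
    push_neg at hc
    have h0 : (0:ℂ) ∈ Metric.closedBall ((a : ℂ) + (b : ℂ) * Complex.I) r := by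
      rw [Metric.mem_closedBall, dist_eq_norm, zero_sub, norm_neg]
      rw [Complex.norm_add_mul_I]
      calc Real.sqrt (a^2+b^2) ≤ Real.sqrt (r^2) := Real.sqrt_le_sqrt (by linarith only [hc])
        _ = r := Real.sqrt_sq hr
    exact hdisk 0 h0 ⟨rfl, le_refl 0⟩
  have hs0 : 0 < s := Real.sqrt_pos.mpr hs2pos
  have hs2 : s^2 = a^2 + b^2 - r^2 := Real.sq_sqrt hs2pos.le
  have hcen := hcenter
  rw [PDcenter, Complex.ext_iff] at hcen
  simp only [Complex.add_re, Complex.add_im, Complex.ofReal_re, Complex.ofReal_im,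
    Complex.mul_re, Complex.mul_im, Complex.I_re, Complex.I_im] at hcen
  have ha' : (A 0 0 + A 1 1)/2 = a := by have h := hcen.1; linarith only [h]
  have hb' : |A 1 0 - A 0 1|/2 = b := by have h := hcen.2; linarith only [h]
  have hb2 : ((A 1 0 - A 0 1)/2)^2 = b^2 := by
    rw [← hb', div_pow, div_pow, sq_abs]
  have hr2 : ((A 0 0 - A 1 1)/2)^2 + ((A 0 1 + A 1 0)/2)^2 = r^2 := by
    rw [← hradius, PDradius, Real.sq_sqrt (by positivity)]
  suffices h : (L 0 0 + L 1 1)/2 = Real.log s ∧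
      ((L 1 0 - L 0 1)/2)^2 = (b * AC (a/s) / s)^2 ∧
      Real.sqrt (((L 0 0 - L 1 1)/2)^2 + ((L 0 1 + L 1 0)/2)^2) = r * AC (a/s) / s by
    obtain ⟨h1, h2, h3⟩ := h
    constructor
    · rw [opNorm_eq, h1, h2, h3]
    · rw [conorm_eq, h1, h2, h3]
  have hcomm : A * L = L * A := by rw [← hexp]; exact commute_exp L
  have e00 := congrFun (congrFun hcomm 0) 0
  have e01 := congrFun (congrFun hcomm 0) 1
  have e10 := congrFun (congrFun hcomm 1) 0
  simp only [Matrix.mul_apply, Fin.sum_univ_two] at e00 e01 e10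
  have e1 : A 0 1 * L 1 0 = A 1 0 * L 0 1 := by linear_combination e00
  have e2 : (A 0 0 - A 1 1)/2 * L 0 1 = A 0 1 * ((L 0 0 - L 1 1)/2) := by
    linear_combination (1/2) * e01
  have e3 : A 1 0 * ((L 0 0 - L 1 1)/2) = (A 0 0 - A 1 1)/2 * L 1 0 := by
    linear_combination (1/2) * e10
  have hdelta : ((A 0 0 - A 1 1)/2)^2 + A 0 1 * A 1 0 = r^2 - b^2 := by
    linear_combination hr2 - hb2
  have hdetA : A.det = s^2 := by
    rw [Matrix.det_fin_two]
    linear_combination ((A 0 0 + A 1 1)/2 + a) * ha' + hb2 - hr2 - hs2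
  rcases lt_trichotomy b r with hbr | hbr | hbr
  · -- b < r : real distinct eigenvalues
    have hrpos : 0 < r := lt_of_le_of_lt hb hbr
    have hrb2 : 0 < r^2 - b^2 := by nlinarith only [hbr, hb]
    set n := Real.sqrt (r^2 - b^2) with hn_def
    have hn2 : n^2 = r^2 - b^2 := Real.sq_sqrt hrb2.le
    have hn0 : 0 < n := Real.sqrt_pos.mpr hrb2
    have hmem_an : ((a - n : ℝ) : ℂ) ∈ Metric.closedBall ((a:ℂ) + (b:ℂ)*Complex.I) r := by
      rw [Metric.mem_closedBall, Complex.dist_eq]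
      rw [show ((a - n:ℝ):ℂ) - ((a:ℂ) + (b:ℂ)*Complex.I) = ↑(-n) + ↑(-b)*Complex.I by
        push_cast; ring]
      rw [Complex.norm_add_mul_I]
      rw [show (-n)^2 + (-b)^2 = r^2 by linear_combination hn2]
      rw [Real.sqrt_sq hrpos.le]
    have han : 0 < a - n := by
      by_contra hc
      push_neg at hc
      exact hdisk _ hmem_an ⟨by simp, by simpa using hc⟩
    have hanpos : 0 < a + n := by linarith only [han, hn0]
    have hs2' : s^2 = (a+n)*(a-n) := by linear_combination hs2 + hn2
    have hlog_s : Real.log s = (Real.log (a+n) + Real.log (a-n))/2 := by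
      have h2 : Real.log (s^2) = Real.log (a+n) + Real.log (a-n) := by
        rw [hs2', Real.log_mul (ne_of_gt hanpos) (ne_of_gt han)]
      have h3 : Real.log (s^2) = 2 * Real.log s := by
        rw [Real.log_pow]; push_cast; ring
      linarith only [h2, h3]
    have hne : ¬((A 0 0 - A 1 1)/2 = 0 ∧ A 0 1 = 0 ∧ A 1 0 = 0) := by
      rintro ⟨h1, h2, h3⟩
      rw [h1, h2, h3] at hr2
      norm_num at hr2
      nlinarith only [hr2, hrpos]
    obtain ⟨γ, hgx, hgy, hgz⟩ := comm_aux ((A 0 0 - A 1 1)/2) (A 0 1) (A 1 0)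
      ((L 0 0 - L 1 1)/2) (L 0 1) (L 1 0) e1 e2 e3 hne
    have hγ0 : γ ≠ 0 := by
      intro hγ
      rw [hγ, zero_mul] at hgx hgy hgz
      have h11 : L 1 1 = L 0 0 := by linarith only [hgx]
      have hsc := scalar_L L h11 hgy hgz
      rw [hexp] at hsc
      apply hne
      refine ⟨?_, ?_, ?_⟩ <;> rw [hsc] <;> simp [Matrix.scalar_apply]
    have hdetL : L.det = ((L 0 0 + L 1 1)/2)^2 - γ^2 * n^2 := by
      rw [Matrix.det_fin_two]
      linear_combination (-(L 0 0 - L 1 1)/2 - γ*((A 0 0 - A 1 1)/2)) * hgx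
        + (-(L 1 0)) * hgy + (-(γ*(A 0 1))) * hgz + (-(γ^2)) * hdelta + (γ^2) * hn2
    have htrL : ((↑((L 0 0 + L 1 1)/2 + γ*n) : ℂ) + (↑((L 0 0 + L 1 1)/2 - γ*n) : ℂ))
        = (L.map (fun x => (x:ℂ))) 0 0 + (L.map (fun x => (x:ℂ))) 1 1 := by
      simp only [Matrix.map_apply]
      push_cast
      ring
    have hprodL : ((↑((L 0 0 + L 1 1)/2 + γ*n) : ℂ) * (↑((L 0 0 + L 1 1)/2 - γ*n) : ℂ))
        = (L.map (fun x => (x:ℂ))).det := by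
      rw [det_map_complex, hdetL]
      push_cast
      ring
    have specL := spec_fin_two (L.map (fun x => (x:ℂ))) _ _ htrL hprodL
    have hc1 : (↑((L 0 0 + L 1 1)/2 + γ*n) : ℂ) ∈ spectrum ℂ (L.map (fun x => (x:ℂ))) := by
      rw [specL]; exact Set.mem_insert _ _
    have hc2 : (↑((L 0 0 + L 1 1)/2 - γ*n) : ℂ) ∈ spectrum ℂ (L.map (fun x => (x:ℂ))) := by
      rw [specL]; exact Set.mem_insert_iff.mpr (Or.inr rfl)
    have hmm1 := spec_exp_mem A L hexp hc1
    have hmm2 := spec_exp_mem A L hexp hc2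
    have htrA : ((↑(a+n) : ℂ) + (↑(a-n) : ℂ))
        = (A.map (fun x => (x:ℂ))) 0 0 + (A.map (fun x => (x:ℂ))) 1 1 := by
      simp only [Matrix.map_apply]
      have hsumA : A 0 0 + A 1 1 = 2*a := by linarith only [ha']
      have hcst : ((A 0 0 : ℝ):ℂ) + ((A 1 1 : ℝ):ℂ) = ((A 0 0 + A 1 1 : ℝ) : ℂ) := by
        push_cast; ring
      rw [hcst, hsumA]
      push_cast
      ring
    have hprodA : ((↑(a+n) : ℂ) * (↑(a-n) : ℂ)) = (A.map (fun x => (x:ℂ))).det := by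
      rw [det_map_complex, hdetA, hs2']
      push_cast
      ring
    have specA := spec_fin_two (A.map (fun x => (x:ℂ))) _ _ htrA hprodA
    rw [specA] at hmm1 hmm2
    simp only [Set.mem_insert_iff, Set.mem_singleton_iff, ← Complex.ofReal_exp,
      Complex.ofReal_inj] at hmm1 hmm2
    have hexp_ne : Real.exp ((L 0 0 + L 1 1)/2 + γ*n) ≠ Real.exp ((L 0 0 + L 1 1)/2 - γ*n) := by
      intro hc
      rw [Real.exp_eq_exp] at hc
      have : γ * n = 0 := by linarith only [hc]
      rcases mul_eq_zero.mp this with h | h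
      · exact hγ0 h
      · exact (ne_of_gt hn0) h
    have hkey : (L 0 0 + L 1 1)/2 + γ*n = Real.log (a+n) ∧ (L 0 0 + L 1 1)/2 - γ*n = Real.log (a-n)
        ∨ (L 0 0 + L 1 1)/2 + γ*n = Real.log (a-n) ∧ (L 0 0 + L 1 1)/2 - γ*n = Real.log (a+n) := by
      rcases hmm1 with h1 | h1 <;> rcases hmm2 with h2 | h2
      · exact absurd (h1.trans h2.symm) hexp_ne
      · left
        constructor
        · have := congrArg Real.log h1; rwa [Real.log_exp] at this
        · have := congrArg Real.log h2; rwa [Real.log_exp] at this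
      · right
        constructor
        · have := congrArg Real.log h1; rwa [Real.log_exp] at this
        · have := congrArg Real.log h2; rwa [Real.log_exp] at this
      · exact absurd (h1.trans h2.symm) hexp_ne
    have hloglog : Real.log (a-n) ≤ Real.log (a+n) :=
      Real.log_le_log han (by linarith only [hn0])
    have htL : (L 0 0 + L 1 1)/2 = Real.log s := by
      rcases hkey with ⟨h1, h2⟩ | ⟨h1, h2⟩ <;> rw [hlog_s] <;> linarith only [h1, h2]
    have hγn : |γ| * n = (Real.log (a+n) - Real.log (a-n))/2 := by
      rcases hkey with ⟨h1, h2⟩ | ⟨h1, h2⟩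
      · have hγpos : 0 ≤ γ*n := by linarith only [h1, h2, hloglog]
        have hγ2 : 0 ≤ γ := by nlinarith only [hγpos, hn0]
        rw [abs_of_nonneg hγ2]
        linarith only [h1, h2]
      · have hγneg : γ*n ≤ 0 := by linarith only [h1, h2, hloglog]
        have hγ2 : γ ≤ 0 := by nlinarith only [hγneg, hn0]
        rw [abs_of_nonpos hγ2]
        linarith only [h1, h2]
    have hxgt : 1 < a/s := by
      rw [lt_div_iff₀ hs0, one_mul]
      have h2 : s^2 < a^2 := by nlinarith only [hs2', hn0, han, hanpos]
      have hapos : 0 < a := by linarith only [han, hn0]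
      exact lt_of_pow_lt_pow_left₀ 2 hapos.le h2
    have hACγ : AC (a/s) / s = |γ| := by
      rw [AC, if_neg (by linarith only [hxgt]), if_neg (by linarith only [hxgt]), arcosh]
      have h1 : (a/s)^2 - 1 = (n/s)^2 := by
        field_simp
        linear_combination - hs2'
      rw [h1, Real.sqrt_sq (by positivity)]
      rw [show a/s + n/s = (a+n)/s by ring, Real.log_div (by positivity) hs0.ne']
      rw [hlog_s]
      have hn' : (Real.log (a+n) - (Real.log (a+n) + Real.log (a-n))/2)
          = |γ| * n := by rw [hγn]; ring
      rw [hn']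
      field_simp
    refine ⟨htL, ?_, ?_⟩
    · rw [hgy, hgz]
      rw [show b * AC (a/s) / s = b * (AC (a/s)/s) by ring, hACγ]
      rw [show (b*|γ|)^2 = b^2*γ^2 by rw [mul_pow, sq_abs]]
      linear_combination γ^2 * hb2
    · rw [hgx, hgy, hgz]
      rw [show (γ*((A 0 0 - A 1 1)/2))^2 + ((γ*(A 0 1) + γ*(A 1 0))/2)^2
          = γ^2 * (((A 0 0 - A 1 1)/2)^2 + ((A 0 1 + A 1 0)/2)^2) by ring]
      rw [Real.sqrt_mul (sq_nonneg γ), Real.sqrt_sq_eq_abs]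
      rw [show Real.sqrt (((A 0 0 - A 1 1)/2)^2 + ((A 0 1 + A 1 0)/2)^2) = r from hradius]
      rw [show r * AC (a/s) / s = r * (AC (a/s)/s) by ring, hACγ]
      ring
  · -- b = r
    have hmem_a : ((a : ℝ) : ℂ) ∈ Metric.closedBall ((a:ℂ) + (b:ℂ)*Complex.I) r := by
      rw [Metric.mem_closedBall, Complex.dist_eq]
      rw [show ((a:ℝ):ℂ) - ((a:ℂ) + (b:ℂ)*Complex.I) = ↑(0:ℝ) + ↑(-b)*Complex.I by
        push_cast; ring]
      rw [Complex.norm_add_mul_I]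
      rw [show (0:ℝ)^2 + (-b)^2 = b^2 by ring, Real.sqrt_sq hb]
      linarith only [hbr]
    have hapos : 0 < a := by
      by_contra hc
      push_neg at hc
      exact hdisk _ hmem_a ⟨by simp, by simpa using hc⟩
    have hsa : s = a := by
      rw [hs_def, show a^2+b^2-r^2 = a^2 by linear_combination (b+r)*hbr, Real.sqrt_sq hapos.le]
    have hACs1 : AC (a/s) = 1 := by
      rw [hsa, div_self hapos.ne', AC, if_neg (lt_irrefl 1), if_pos rfl]
    by_cases hK : (A 0 0 - A 1 1)/2 = 0 ∧ A 0 1 = 0 ∧ A 1 0 = 0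
    · -- A is scalar; b = r = 0
      obtain ⟨k1, k2, k3⟩ := hK
      have hb0 : b = 0 := by rw [← hb', k2, k3]; norm_num
      have hr0 : r = 0 := by linarith only [hbr, hb0]
      have hA00 : A 0 0 = a := by linarith only [ha', k1]
      have hA11 : A 1 1 = a := by linarith only [ha', k1]
      have htrA : ((↑a : ℂ) + (↑a : ℂ))
          = (A.map (fun x => (x:ℂ))) 0 0 + (A.map (fun x => (x:ℂ))) 1 1 := by
        simp only [Matrix.map_apply, hA00, hA11]
      have hprodA : ((↑a : ℂ) * (↑a : ℂ)) = (A.map (fun x => (x:ℂ))).det := by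
        rw [det_map_complex, hdetA, ← hsa]
        push_cast
        ring
      have specA := spec_fin_two (A.map (fun x => (x:ℂ))) _ _ htrA hprodA
      have hdetL3 : L.det
          = ((L 0 0 + L 1 1)/2)^2 - (((L 0 0 - L 1 1)/2)^2 + L 0 1 * L 1 0) := by
        rw [Matrix.det_fin_two]; ring
      have hd0 : ((L 0 0 - L 1 1)/2)^2 + L 0 1 * L 1 0 = 0
          ∧ (L 0 0 + L 1 1)/2 = Real.log a := by
        rcases le_or_gt 0 (((L 0 0 - L 1 1)/2)^2 + L 0 1 * L 1 0) with hd | hd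
        · set w := Real.sqrt (((L 0 0 - L 1 1)/2)^2 + L 0 1 * L 1 0) with hw_def
          have hw2 : w^2 = ((L 0 0 - L 1 1)/2)^2 + L 0 1 * L 1 0 := Real.sq_sqrt hd
          have hw2c : ((w:ℝ):ℂ)^2
              = ((((L 0 0 : ℝ):ℂ) - ((L 1 1 : ℝ):ℂ))/2)^2 + ((L 0 1 : ℝ):ℂ) * ((L 1 0 : ℝ):ℂ) := by
            have h := congrArg (fun q : ℝ => (q:ℂ)) hw2
            push_cast at h
            exact h
          have htrL : ((↑((L 0 0 + L 1 1)/2 + w) : ℂ) + (↑((L 0 0 + L 1 1)/2 - w) : ℂ))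
              = (L.map (fun x => (x:ℂ))) 0 0 + (L.map (fun x => (x:ℂ))) 1 1 := by
            simp only [Matrix.map_apply]; push_cast; ring
          have hprodL : ((↑((L 0 0 + L 1 1)/2 + w) : ℂ) * (↑((L 0 0 + L 1 1)/2 - w) : ℂ))
              = (L.map (fun x => (x:ℂ))).det := by
            rw [det_map_complex, hdetL3]
            push_cast
            linear_combination - hw2c
          have specL := spec_fin_two (L.map (fun x => (x:ℂ))) _ _ htrL hprodL
          have hc1 : (↑((L 0 0 + L 1 1)/2 + w) : ℂ) ∈ spectrum ℂ (L.map (fun x => (x:ℂ))) := by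
            rw [specL]; exact Set.mem_insert _ _
          have hc2 : (↑((L 0 0 + L 1 1)/2 - w) : ℂ) ∈ spectrum ℂ (L.map (fun x => (x:ℂ))) := by
            rw [specL]; exact Set.mem_insert_iff.mpr (Or.inr rfl)
          have hmm1 := spec_exp_mem A L hexp hc1
          have hmm2 := spec_exp_mem A L hexp hc2
          rw [specA] at hmm1 hmm2
          simp only [Set.mem_insert_iff, Set.mem_singleton_iff, ← Complex.ofReal_exp,
            Complex.ofReal_inj] at hmm1 hmm2
          have h1 : Real.exp ((L 0 0 + L 1 1)/2 + w) = a := by rcases hmm1 with h|h <;> exact h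
          have h2 : Real.exp ((L 0 0 + L 1 1)/2 - w) = a := by rcases hmm2 with h|h <;> exact h
          have hw_eq : w = 0 := by
            have h3 := h1.trans h2.symm
            rw [Real.exp_eq_exp] at h3
            linarith only [h3]
          constructor
          · rw [← hw2, hw_eq]; norm_num
          · have h4 := congrArg Real.log h1
            rw [Real.log_exp] at h4
            rw [← h4, hw_eq]; ring
        · exfalso
          set w := Real.sqrt (-(((L 0 0 - L 1 1)/2)^2 + L 0 1 * L 1 0)) with hw_def
          have hw2 : w^2 = -(((L 0 0 - L 1 1)/2)^2 + L 0 1 * L 1 0) :=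
            Real.sq_sqrt (by linarith only [hd])
          have hw0 : 0 < w := Real.sqrt_pos.mpr (by linarith only [hd])
          have hw2c : ((w:ℝ):ℂ)^2
              = -(((((L 0 0 : ℝ):ℂ) - ((L 1 1 : ℝ):ℂ))/2)^2 + ((L 0 1 : ℝ):ℂ) * ((L 1 0 : ℝ):ℂ)) := by
            have h := congrArg (fun q : ℝ => (q:ℂ)) hw2
            push_cast at h
            exact h
          have htrL : ((↑((L 0 0 + L 1 1)/2) + ↑w*Complex.I)
                + (↑((L 0 0 + L 1 1)/2) - ↑w*Complex.I) : ℂ)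
              = (L.map (fun x => (x:ℂ))) 0 0 + (L.map (fun x => (x:ℂ))) 1 1 := by
            simp only [Matrix.map_apply]; push_cast; ring
          have hprodL : ((↑((L 0 0 + L 1 1)/2) + ↑w*Complex.I)
                * (↑((L 0 0 + L 1 1)/2) - ↑w*Complex.I) : ℂ)
              = (L.map (fun x => (x:ℂ))).det := by
            rw [det_map_complex, hdetL3]
            push_cast
            linear_combination (-((w:ℝ):ℂ)^2) * Complex.I_sq + hw2c
          have specL := spec_fin_two (L.map (fun x => (x:ℂ))) _ _ htrL hprodL
          have hc1 : (↑((L 0 0 + L 1 1)/2) + ↑w*Complex.I : ℂ)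
              ∈ spectrum ℂ (L.map (fun x => (x:ℂ))) := by
            rw [specL]; exact Set.mem_insert _ _
          have hstrip1 := hstrip _ hc1
          have him : (↑((L 0 0 + L 1 1)/2) + ↑w*Complex.I : ℂ).im = w := by
            simp only [Complex.add_im, Complex.ofReal_im, Complex.mul_im, Complex.I_im,
              Complex.I_re, Complex.ofReal_re, mul_one, mul_zero, zero_add, add_zero, zero_mul]
          rw [him, Set.mem_Ioo] at hstrip1
          have hmm1 := spec_exp_mem A L hexp hc1
          rw [specA] at hmm1
          simp only [Set.mem_insert_iff, Set.mem_singleton_iff] at hmm1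
          have h1 : Complex.exp (↑((L 0 0 + L 1 1)/2) + ↑w*Complex.I) = (↑a : ℂ) := by
            rcases hmm1 with h|h <;> exact h
          have him2 := congrArg Complex.im h1
          rw [Complex.exp_im, Complex.ofReal_im, him] at him2
          have hre1 : (↑((L 0 0 + L 1 1)/2) + ↑w*Complex.I : ℂ).re = (L 0 0 + L 1 1)/2 := by
            simp only [Complex.add_re, Complex.ofReal_re, Complex.mul_re, Complex.I_re,
              Complex.I_im, Complex.ofReal_im, mul_one, mul_zero, zero_mul, add_zero, sub_zero]
          rw [hre1] at him2
          have hsinpos : 0 < Real.sin w := Real.sin_pos_of_pos_of_lt_pi hw0 hstrip1.2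
          have hEpos : (0:ℝ) < Real.exp ((L 0 0 + L 1 1)/2) := Real.exp_pos _
          nlinarith only [him2, hsinpos, hEpos]
      obtain ⟨hd0', htL0⟩ := hd0
      have hN2 := nilsq ((L 0 0 - L 1 1)/2) (L 0 1) (L 1 0) hd0'
      have hexp2 : A = Real.exp ((L 0 0 + L 1 1)/2)
          • ((1:Matrix (Fin 2) (Fin 2) ℝ)
            + Matrix.of ![![(L 0 0 - L 1 1)/2, L 0 1], ![L 1 0, -((L 0 0 - L 1 1)/2)]]) := by
        rw [← hexp]
        conv_lhs => rw [L_decomp L]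
        exact exp_scalar_add_nilpotent _ _ hN2
      have hA01' : A 0 1 = Real.exp ((L 0 0 + L 1 1)/2) * L 0 1 := by
        have h := congrFun (congrFun hexp2 0) 1
        simpa [Matrix.add_apply, Matrix.one_apply] using h
      have hA10' : A 1 0 = Real.exp ((L 0 0 + L 1 1)/2) * L 1 0 := by
        have h := congrFun (congrFun hexp2 1) 0
        simpa [Matrix.add_apply, Matrix.one_apply] using h
      have hA00' : A 0 0 = Real.exp ((L 0 0 + L 1 1)/2) * (1 + (L 0 0 - L 1 1)/2) := by
        have h := congrFun (congrFun hexp2 0) 0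
        simpa [Matrix.add_apply, Matrix.one_apply] using h
      have hA11' : A 1 1 = Real.exp ((L 0 0 + L 1 1)/2) * (1 - (L 0 0 - L 1 1)/2) := by
        have h := congrFun (congrFun hexp2 1) 1
        simpa [Matrix.add_apply, Matrix.one_apply, sub_eq_add_neg] using h
      have hEpos : (0:ℝ) < Real.exp ((L 0 0 + L 1 1)/2) := Real.exp_pos _
      have hy0 : L 0 1 = 0 := by
        rw [k2] at hA01'
        exact (mul_eq_zero.mp hA01'.symm).resolve_left hEpos.ne'
      have hz0 : L 1 0 = 0 := by
        rw [k3] at hA10'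
        exact (mul_eq_zero.mp hA10'.symm).resolve_left hEpos.ne'
      have hx0 : (L 0 0 - L 1 1)/2 = 0 := by
        have h5 : Real.exp ((L 0 0 + L 1 1)/2) * (2 * ((L 0 0 - L 1 1)/2)) = 0 := by
          linear_combination (-1 : ℝ) * hA00' + hA11' + 2*k1
        have h6 := (mul_eq_zero.mp h5).resolve_left hEpos.ne'
        linarith only [h6]
      refine ⟨by rw [htL0, hsa], ?_, ?_⟩
      · rw [hy0, hz0, hb0]
        norm_num
      · rw [hx0, hy0, hz0, hr0]
        norm_num
    · -- K ≠ 0, parabolic case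
      obtain ⟨γ, hgx, hgy, hgz⟩ := comm_aux ((A 0 0 - A 1 1)/2) (A 0 1) (A 1 0)
        ((L 0 0 - L 1 1)/2) (L 0 1) (L 1 0) e1 e2 e3 hK
      have hdlt0 : ((A 0 0 - A 1 1)/2)^2 + A 0 1 * A 1 0 = 0 := by
        linear_combination hdelta - (b+r)*hbr
      have hdL0 : ((L 0 0 - L 1 1)/2)^2 + L 0 1 * L 1 0 = 0 := by
        rw [hgx, hgy, hgz]
        linear_combination γ^2 * hdlt0
      have hN2 := nilsq ((L 0 0 - L 1 1)/2) (L 0 1) (L 1 0) hdL0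
      have hexp2 : A = Real.exp ((L 0 0 + L 1 1)/2)
          • ((1:Matrix (Fin 2) (Fin 2) ℝ)
            + Matrix.of ![![(L 0 0 - L 1 1)/2, L 0 1], ![L 1 0, -((L 0 0 - L 1 1)/2)]]) := by
        rw [← hexp]
        conv_lhs => rw [L_decomp L]
        exact exp_scalar_add_nilpotent _ _ hN2
      have hA01' : A 0 1 = Real.exp ((L 0 0 + L 1 1)/2) * L 0 1 := by
        have h := congrFun (congrFun hexp2 0) 1
        simpa [Matrix.add_apply, Matrix.one_apply] using h
      have hA10' : A 1 0 = Real.exp ((L 0 0 + L 1 1)/2) * L 1 0 := by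
        have h := congrFun (congrFun hexp2 1) 0
        simpa [Matrix.add_apply, Matrix.one_apply] using h
      have hA00' : A 0 0 = Real.exp ((L 0 0 + L 1 1)/2) * (1 + (L 0 0 - L 1 1)/2) := by
        have h := congrFun (congrFun hexp2 0) 0
        simpa [Matrix.add_apply, Matrix.one_apply] using h
      have hA11' : A 1 1 = Real.exp ((L 0 0 + L 1 1)/2) * (1 - (L 0 0 - L 1 1)/2) := by
        have h := congrFun (congrFun hexp2 1) 1
        simpa [Matrix.add_apply, Matrix.one_apply, sub_eq_add_neg] using h
      have hEpos : (0:ℝ) < Real.exp ((L 0 0 + L 1 1)/2) := Real.exp_pos _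
      have hEa : Real.exp ((L 0 0 + L 1 1)/2) = a := by
        have h5 : A 0 0 + A 1 1 = 2 * Real.exp ((L 0 0 + L 1 1)/2) := by
          linear_combination hA00' + hA11'
        linarith only [h5, ha']
      have htL0 : (L 0 0 + L 1 1)/2 = Real.log a := by
        rw [← hEa, Real.log_exp]
      have hEγ : a * γ = 1 := by
        by_contra hc
        apply hK
        have hy1 : A 0 1 = 0 := by
          have h5 : A 0 1 * (a * γ - 1) = 0 := by
            rw [hgy] at hA01'
            rw [hEa] at hA01'
            linear_combination - hA01'
          rcases mul_eq_zero.mp h5 with h | h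
          · exact h
          · exact absurd (by linarith only [h] : a * γ = 1) hc
        have hz1 : A 1 0 = 0 := by
          have h5 : A 1 0 * (a * γ - 1) = 0 := by
            rw [hgz] at hA10'
            rw [hEa] at hA10'
            linear_combination - hA10'
          rcases mul_eq_zero.mp h5 with h | h
          · exact h
          · exact absurd (by linarith only [h] : a * γ = 1) hc
        have hx1 : (A 0 0 - A 1 1)/2 = 0 := by
          have h5 : ((A 0 0 - A 1 1)/2) * (a * γ - 1) = 0 := by
            rw [hEa] at hA00' hA11'
            linear_combination (-(1:ℝ)/2) * hA00' + (1/2) * hA11' + (-a) * hgx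
          rcases mul_eq_zero.mp h5 with h | h
          · exact h
          · exact absurd (by linarith only [h] : a * γ = 1) hc
        exact ⟨hx1, hy1, hz1⟩
      have hγa : γ = 1/a := by
        rw [eq_div_iff hapos.ne']
        linear_combination hEγ
      refine ⟨by rw [htL0, hsa], ?_, ?_⟩
      · rw [hgy, hgz, hACs1, hγa, hsa]
        linear_combination hb2 / a^2
      · rw [hgx, hgy, hgz]
        rw [show (γ*((A 0 0 - A 1 1)/2))^2 + ((γ*(A 0 1) + γ*(A 1 0))/2)^2
            = γ^2 * (((A 0 0 - A 1 1)/2)^2 + ((A 0 1 + A 1 0)/2)^2) by ring]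
        rw [Real.sqrt_mul (sq_nonneg γ), Real.sqrt_sq_eq_abs]
        rw [show Real.sqrt (((A 0 0 - A 1 1)/2)^2 + ((A 0 1 + A 1 0)/2)^2) = r from hradius]
        rw [hACs1, hγa, hsa, abs_of_pos (by positivity : (0:ℝ) < 1/a)]
        ring
  · -- r < b : complex eigenvalues
    have hbpos : 0 < b := lt_of_le_of_lt hr hbr
    have hbr2 : 0 < b^2 - r^2 := by nlinarith only [hbr, hr]
    set m := Real.sqrt (b^2 - r^2) with hm_def
    have hm2 : m^2 = b^2 - r^2 := Real.sq_sqrt hbr2.le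
    have hm0 : 0 < m := Real.sqrt_pos.mpr hbr2
    have hzy : A 1 0 - A 0 1 ≠ 0 := by
      intro hc
      rw [hc, abs_zero] at hb'
      rw [← hb'] at hbpos
      norm_num at hbpos
    have hne : ¬((A 0 0 - A 1 1)/2 = 0 ∧ A 0 1 = 0 ∧ A 1 0 = 0) := by
      rintro ⟨-, h2, h3⟩
      exact hzy (by rw [h2, h3]; ring)
    obtain ⟨γ, hgx, hgy, hgz⟩ := comm_aux ((A 0 0 - A 1 1)/2) (A 0 1) (A 1 0)
      ((L 0 0 - L 1 1)/2) (L 0 1) (L 1 0) e1 e2 e3 hne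
    have hγ0 : γ ≠ 0 := by
      intro hγ
      rw [hγ, zero_mul] at hgx hgy hgz
      have h11 : L 1 1 = L 0 0 := by linarith only [hgx]
      have hsc := scalar_L L h11 hgy hgz
      rw [hexp] at hsc
      apply hzy
      rw [hsc]
      simp [Matrix.scalar_apply]
    have hdetL : L.det = ((L 0 0 + L 1 1)/2)^2 + γ^2 * m^2 := by
      rw [Matrix.det_fin_two]
      linear_combination (-(L 0 0 - L 1 1)/2 - γ*((A 0 0 - A 1 1)/2)) * hgx
        + (-(L 1 0)) * hgy + (-(γ*(A 0 1))) * hgz + (-(γ^2)) * hdelta + (-(γ^2)) * hm2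
    have htrL : ((↑((L 0 0 + L 1 1)/2) + ↑(γ*m)*Complex.I)
          + (↑((L 0 0 + L 1 1)/2) - ↑(γ*m)*Complex.I) : ℂ)
        = (L.map (fun x => (x:ℂ))) 0 0 + (L.map (fun x => (x:ℂ))) 1 1 := by
      simp only [Matrix.map_apply]
      push_cast
      ring
    have hprodL : ((↑((L 0 0 + L 1 1)/2) + ↑(γ*m)*Complex.I)
          * (↑((L 0 0 + L 1 1)/2) - ↑(γ*m)*Complex.I) : ℂ)
        = (L.map (fun x => (x:ℂ))).det := by
      rw [det_map_complex, hdetL]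
      push_cast
      linear_combination (-((γ:ℂ)*(m:ℂ))^2) * Complex.I_sq
    have specL := spec_fin_two (L.map (fun x => (x:ℂ))) _ _ htrL hprodL
    have hc1 : (↑((L 0 0 + L 1 1)/2) + ↑(γ*m)*Complex.I : ℂ)
        ∈ spectrum ℂ (L.map (fun x => (x:ℂ))) := by
      rw [specL]; exact Set.mem_insert _ _
    have hstrip1 := hstrip _ hc1
    have him : (↑((L 0 0 + L 1 1)/2) + ↑(γ*m)*Complex.I : ℂ).im = γ*m := by
      simp only [Complex.add_im, Complex.ofReal_im, Complex.mul_im, Complex.I_im, Complex.I_re,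
        Complex.ofReal_re, mul_one, mul_zero, zero_add, add_zero, zero_mul]
    rw [him, Set.mem_Ioo] at hstrip1
    have hθabs : |γ*m| < Real.pi := abs_lt.mpr ⟨hstrip1.1, hstrip1.2⟩
    have hmem := spec_exp_mem A L hexp hc1
    have htrA : ((↑a + ↑m*Complex.I) + (↑a - ↑m*Complex.I) : ℂ)
        = (A.map (fun x => (x:ℂ))) 0 0 + (A.map (fun x => (x:ℂ))) 1 1 := by
      simp only [Matrix.map_apply]
      have hsumA : A 0 0 + A 1 1 = 2*a := by linarith only [ha']
      have : ((A 0 0 : ℝ):ℂ) + ((A 1 1 : ℝ):ℂ) = ((A 0 0 + A 1 1 : ℝ) : ℂ) := by push_cast; ring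
      rw [this, hsumA]
      push_cast
      ring
    have hprodA : ((↑a + ↑m*Complex.I) * (↑a - ↑m*Complex.I) : ℂ)
        = (A.map (fun x => (x:ℂ))).det := by
      rw [det_map_complex, hdetA]
      have hsm : s^2 = a^2 + m^2 := by linear_combination hs2 - hm2
      rw [hsm]
      push_cast
      linear_combination (-(m:ℂ)^2) * Complex.I_sq
    have specA := spec_fin_two (A.map (fun x => (x:ℂ))) _ _ htrA hprodA
    rw [specA] at hmem
    simp only [Set.mem_insert_iff, Set.mem_singleton_iff] at hmem
    have hre_exp : (Complex.exp (↑((L 0 0 + L 1 1)/2) + ↑(γ*m)*Complex.I)).re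
        = Real.exp ((L 0 0 + L 1 1)/2) * Real.cos (γ*m) := by
      rw [Complex.exp_re]; simp
    have habs2 : Real.exp ((L 0 0 + L 1 1)/2) = s := by
      rcases hmem with h | h
      · have h2 := congrArg (‖·‖) h
        rw [Complex.norm_exp, Complex.norm_add_mul_I] at h2
        simp only [Complex.add_re, Complex.ofReal_re, Complex.mul_re, Complex.I_re,
          Complex.I_im, Complex.ofReal_im] at h2
        rw [show Real.sqrt (a^2+m^2) = s by
          rw [show a^2+m^2 = a^2+b^2-r^2 by linear_combination hm2, ← hs_def]] at h2
        convert h2 using 2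
        ring
      · have h2 := congrArg (‖·‖) h
        rw [Complex.norm_exp] at h2
        rw [show (↑a - ↑m*Complex.I : ℂ) = ↑a + ↑(-m)*Complex.I by push_cast; ring,
          Complex.norm_add_mul_I] at h2
        simp only [Complex.add_re, Complex.ofReal_re, Complex.mul_re, Complex.I_re,
          Complex.I_im, Complex.ofReal_im] at h2
        rw [show Real.sqrt (a^2+(-m)^2) = s by
          rw [show a^2+(-m)^2 = a^2+b^2-r^2 by linear_combination hm2, ← hs_def]] at h2
        convert h2 using 2
        ring
    have htL : (L 0 0 + L 1 1)/2 = Real.log s := by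
      rw [← habs2, Real.log_exp]
    have hre2 : Real.exp ((L 0 0 + L 1 1)/2) * Real.cos (γ*m) = a := by
      rcases hmem with h | h <;>
      · have h2 := congrArg Complex.re h
        rw [hre_exp] at h2
        simpa using h2
    have hcos : Real.cos (γ*m) = a/s := by
      rw [habs2] at hre2
      field_simp
      linear_combination hre2
    have harccos : Real.arccos (a/s) = |γ*m| := by
      rw [← hcos, ← Real.cos_abs]
      exact Real.arccos_cos (abs_nonneg _) hθabs.le
    have hxlt : a/s < 1 := by
      rw [div_lt_one hs0]
      have h1 : s^2 - a^2 = m^2 := by linear_combination hs2 - hm2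
      have h2 : a^2 < s^2 := by linarith only [h1, pow_pos hm0 2]
      exact lt_of_pow_lt_pow_left₀ 2 hs0.le h2
    have hACγ : AC (a/s) / s = |γ| := by
      rw [AC, if_pos hxlt, harccos]
      have h1 : 1 - (a/s)^2 = (m/s)^2 := by
        field_simp
        linear_combination hs2 - hm2
      rw [h1, Real.sqrt_sq (by positivity)]
      rw [abs_mul, abs_of_pos hm0]
      field_simp
    refine ⟨htL, ?_, ?_⟩
    · rw [hgy, hgz]
      rw [show b * AC (a/s) / s = b * (AC (a/s)/s) by ring, hACγ]
      rw [show (b*|γ|)^2 = b^2*γ^2 by rw [mul_pow, sq_abs]]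
      linear_combination γ^2 * hb2
    · rw [hgx, hgy, hgz]
      rw [show (γ*((A 0 0 - A 1 1)/2))^2 + ((γ*(A 0 1) + γ*(A 1 0))/2)^2
          = γ^2 * (((A 0 0 - A 1 1)/2)^2 + ((A 0 1 + A 1 0)/2)^2) by ring]
      rw [Real.sqrt_mul (sq_nonneg γ), Real.sqrt_sq_eq_abs]
      rw [show Real.sqrt (((A 0 0 - A 1 1)/2)^2 + ((A 0 1 + A 1 0)/2)^2) = r from hradius]
      rw [show r * AC (a/s) / s = r * (AC (a/s)/s) by ring, hACγ]
      ring
end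

section
/- For real a ≠ 0 and real b, the matrix-valued function A(θ) = R(bθ)·(C(a²θ²−b²θ²)·I + S(a²θ²−b²θ²)·(−bθ·Ĩ + aθ·K̃)), where R(w) = [[cos w, −sin w],[sin w, cos w]], Ĩ = [[0,−1],[1,0]], K̃ = [[0,1],[1,0]], C(x) = cosh√x (x≥0), cos√(−x) (x<0), and S(x) = sinh√x/√x (x>0), 1 (x=0), sin√(−x)/√(−x) (x<0), satisfies A(0) = I and A′(θ)·A(θ)⁻¹ = a·[[−sin 2bθ, cos 2bθ],[cos 2bθ, sin 2bθ]] for all θ ∈ ℝ. -/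
noncomputable def CC (x : ℝ) : ℝ :=
  if 0 ≤ x then Real.cosh (Real.sqrt x) else Real.cos (Real.sqrt (-x))

noncomputable def SS (x : ℝ) : ℝ :=
  if 0 < x then Real.sinh (Real.sqrt x) / Real.sqrt x
  else if x = 0 then 1
  else Real.sin (Real.sqrt (-x)) / Real.sqrt (-x)


lemma CC_zero : CC 0 = 1 := by simp [CC]

lemma CC_SS_identity (x : ℝ) : CC x ^ 2 - x * SS x ^ 2 = 1 := by
  rcases lt_trichotomy x 0 with h | h | h
  · have hx : ¬ (0 ≤ x) := not_le.mpr h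
    have h0 : Real.sqrt (-x) ≠ 0 := ne_of_gt (Real.sqrt_pos.mpr (by linarith))
    simp only [CC, SS, if_neg hx, if_neg (not_lt.mpr h.le), if_neg h.ne]
    have hsq : Real.sqrt (-x) ^ 2 = -x := Real.sq_sqrt (by linarith)
    field_simp
    nlinarith [Real.sin_sq_add_cos_sq (Real.sqrt (-x))]
  · simp [CC, SS, h]
  · have h0 : Real.sqrt x ≠ 0 := ne_of_gt (Real.sqrt_pos.mpr h)
    simp only [CC, SS, if_pos h.le, if_pos h]
    have hsq : Real.sqrt x ^ 2 = x := Real.sq_sqrt h.le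
    field_simp
    linear_combination x * Real.cosh_sq_sub_sinh_sq (Real.sqrt x) + (Real.cosh (Real.sqrt x) ^ 2 - 1) * hsq

lemma CC_eq_pos {k : ℝ} (hk : 0 < k) (t : ℝ) :
    CC (k * t ^ 2) = Real.cosh (Real.sqrt k * t) := by
  have h : (0:ℝ) ≤ k * t ^ 2 := by positivity
  rw [CC, if_pos h, Real.sqrt_mul hk.le, Real.sqrt_sq_eq_abs,
    show Real.sqrt k * |t| = |Real.sqrt k * t| from by
      rw [abs_mul, abs_of_nonneg (Real.sqrt_nonneg k)],
    Real.cosh_abs]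

lemma SS_eq_pos {k : ℝ} (hk : 0 < k) (t : ℝ) :
    t * SS (k * t ^ 2) = Real.sinh (Real.sqrt k * t) / Real.sqrt k := by
  have hc : (0:ℝ) < Real.sqrt k := Real.sqrt_pos.mpr hk
  rcases eq_or_ne t 0 with rfl | ht
  · simp [SS]
  have h : (0:ℝ) < k * t ^ 2 := by positivity
  rw [SS, if_pos h, Real.sqrt_mul hk.le, Real.sqrt_sq_eq_abs]
  rcases ht.lt_or_gt with h1 | h1
  · rw [abs_of_neg h1]
    rw [show Real.sqrt k * -t = -(Real.sqrt k * t) by ring, Real.sinh_neg]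
    field_simp
  · rw [abs_of_pos h1]; field_simp

lemma CC_eq_neg {k : ℝ} (hk : k < 0) (t : ℝ) :
    CC (k * t ^ 2) = Real.cos (Real.sqrt (-k) * t) := by
  rcases eq_or_ne t 0 with rfl | ht
  · simp [CC]
  have h : ¬ (0 ≤ k * t ^ 2) := by
    push_neg
    have : 0 < t ^ 2 := by positivity
    nlinarith
  rw [CC, if_neg h, show -(k * t ^ 2) = (-k) * t ^ 2 by ring,
    Real.sqrt_mul (by linarith), Real.sqrt_sq_eq_abs,
    show Real.sqrt (-k) * |t| = |Real.sqrt (-k) * t| from by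
      rw [abs_mul, abs_of_nonneg (Real.sqrt_nonneg (-k))],
    Real.cos_abs]

lemma SS_eq_neg {k : ℝ} (hk : k < 0) (t : ℝ) :
    t * SS (k * t ^ 2) = Real.sin (Real.sqrt (-k) * t) / Real.sqrt (-k) := by
  have hc : (0:ℝ) < Real.sqrt (-k) := Real.sqrt_pos.mpr (by linarith)
  rcases eq_or_ne t 0 with rfl | ht
  · simp [SS]
  have ht2 : 0 < t ^ 2 := by positivity
  have h : k * t ^ 2 < 0 := by nlinarith
  rw [SS, if_neg (not_lt.mpr h.le), if_neg h.ne,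
    show -(k * t ^ 2) = (-k) * t ^ 2 by ring,
    Real.sqrt_mul (by linarith), Real.sqrt_sq_eq_abs]
  rcases ht.lt_or_gt with h1 | h1
  · rw [abs_of_neg h1, show Real.sqrt (-k) * -t = -(Real.sqrt (-k) * t) by ring,
      Real.sin_neg]
    field_simp
  · rw [abs_of_pos h1]; field_simp

lemma hasDerivAt_F (k θ : ℝ) :
    HasDerivAt (fun t => CC (k * t ^ 2)) (k * (θ * SS (k * θ ^ 2))) θ := by
  rcases lt_trichotomy k 0 with hk | rfl | hk
  · have hc : (0:ℝ) < Real.sqrt (-k) := Real.sqrt_pos.mpr (by linarith)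
    have hsq : Real.sqrt (-k) ^ 2 = -k := Real.sq_sqrt (by linarith)
    have h1 : HasDerivAt (fun t : ℝ => Real.cos (Real.sqrt (-k) * t))
        (-Real.sin (Real.sqrt (-k) * θ) * (Real.sqrt (-k) * 1)) θ :=
      ((hasDerivAt_id θ).const_mul _).cos
    have h2 : (fun t => CC (k * t ^ 2)) = fun t : ℝ => Real.cos (Real.sqrt (-k) * t) :=
      funext fun t => CC_eq_neg hk t
    rw [h2, SS_eq_neg hk]
    convert h1 using 1
    field_simp
    linear_combination Real.sin (Real.sqrt (-k) * θ) * hsq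
  · have : (fun t : ℝ => CC (0 * t ^ 2)) = fun _ : ℝ => 1 := by
      funext t; simp [CC]
    rw [this]
    simpa using (hasDerivAt_const θ (1:ℝ))
  · have hc : (0:ℝ) < Real.sqrt k := Real.sqrt_pos.mpr hk
    have hsq : Real.sqrt k ^ 2 = k := Real.sq_sqrt hk.le
    have h1 : HasDerivAt (fun t : ℝ => Real.cosh (Real.sqrt k * t))
        (Real.sinh (Real.sqrt k * θ) * (Real.sqrt k * 1)) θ :=
      ((hasDerivAt_id θ).const_mul _).cosh
    have h2 : (fun t => CC (k * t ^ 2)) = fun t : ℝ => Real.cosh (Real.sqrt k * t) :=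
      funext fun t => CC_eq_pos hk t
    rw [h2, SS_eq_pos hk]
    convert h1 using 1
    field_simp
    linear_combination (-Real.sinh (Real.sqrt k * θ)) * hsq

lemma hasDerivAt_G (k θ : ℝ) :
    HasDerivAt (fun t => t * SS (k * t ^ 2)) (CC (k * θ ^ 2)) θ := by
  rcases lt_trichotomy k 0 with hk | rfl | hk
  · have hc : (0:ℝ) < Real.sqrt (-k) := Real.sqrt_pos.mpr (by linarith)
    have h1 : HasDerivAt (fun t : ℝ => Real.sin (Real.sqrt (-k) * t) / Real.sqrt (-k))
        (Real.cos (Real.sqrt (-k) * θ) * (Real.sqrt (-k) * 1) / Real.sqrt (-k)) θ :=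
      (((hasDerivAt_id θ).const_mul _).sin).div_const _
    have h2 : (fun t => t * SS (k * t ^ 2))
        = fun t : ℝ => Real.sin (Real.sqrt (-k) * t) / Real.sqrt (-k) :=
      funext fun t => SS_eq_neg hk t
    rw [h2, CC_eq_neg hk]
    convert h1 using 1
    field_simp
  · have : (fun t : ℝ => t * SS (0 * t ^ 2)) = fun t : ℝ => t := by
      funext t; simp [SS]
    rw [this, show CC (0 * θ ^ 2) = 1 by simp [CC]]
    exact hasDerivAt_id θ
  · have hc : (0:ℝ) < Real.sqrt k := Real.sqrt_pos.mpr hk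
    have h1 : HasDerivAt (fun t : ℝ => Real.sinh (Real.sqrt k * t) / Real.sqrt k)
        (Real.cosh (Real.sqrt k * θ) * (Real.sqrt k * 1) / Real.sqrt k) θ :=
      (((hasDerivAt_id θ).const_mul _).sinh).div_const _
    have h2 : (fun t => t * SS (k * t ^ 2))
        = fun t : ℝ => Real.sinh (Real.sqrt k * t) / Real.sqrt k :=
      funext fun t => SS_eq_pos hk t
    rw [h2, CC_eq_pos hk]
    convert h1 using 1
    field_simp

lemma smul_fin_two' (r x y z w : ℝ) :
    r • (!![x, y; z, w] : Matrix (Fin 2) (Fin 2) ℝ) = !![r * x, r * y; r * z, r * w] := by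
  ext i j
  fin_cases i <;> fin_cases j <;> simp

theorem stmt15 (a b : ℝ) (ha : a ≠ 0) (A : ℝ → Matrix (Fin 2) (Fin 2) ℝ)
    (hA : ∀ θ : ℝ, A θ =
      !![Real.cos (b * θ), -Real.sin (b * θ); Real.sin (b * θ), Real.cos (b * θ)] *
        (CC (a ^ 2 * θ ^ 2 - b ^ 2 * θ ^ 2) • (1 : Matrix (Fin 2) (Fin 2) ℝ) +
          SS (a ^ 2 * θ ^ 2 - b ^ 2 * θ ^ 2) •
            ((-(b * θ)) • !![(0 : ℝ), -1; 1, 0] + (a * θ) • !![(0 : ℝ), 1; 1, 0]))) :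
    A 0 = 1 ∧
    ∀ θ : ℝ, ∃ D : Matrix (Fin 2) (Fin 2) ℝ,
      (∀ i j : Fin 2, HasDerivAt (fun s => A s i j) (D i j) θ) ∧
      D * (A θ)⁻¹ = a • !![-Real.sin (2 * b * θ), Real.cos (2 * b * θ);
        Real.cos (2 * b * θ), Real.sin (2 * b * θ)] := by
  set k : ℝ := a ^ 2 - b ^ 2 with hk
  set F : ℝ → ℝ := fun t => CC (k * t ^ 2) with hFdef
  set G : ℝ → ℝ := fun t => t * SS (k * t ^ 2) with hGdef
  have harg : ∀ θ : ℝ, a ^ 2 * θ ^ 2 - b ^ 2 * θ ^ 2 = k * θ ^ 2 := fun θ => by ring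
  have h00 : ∀ θ : ℝ, A θ 0 0
      = Real.cos (b * θ) * F θ - Real.sin (b * θ) * ((a - b) * G θ) := by
    intro θ
    rw [hA θ, harg θ]
    simp only [Matrix.mul_apply, Fin.sum_univ_two, Matrix.add_apply, Matrix.smul_apply,
      Matrix.one_fin_two, Matrix.of_apply, Matrix.cons_val', Matrix.cons_val_zero,
      Matrix.cons_val_one, Matrix.head_cons, Matrix.head_fin_const, Matrix.empty_val',
      Matrix.cons_val_fin_one, smul_eq_mul, hFdef, hGdef]
    ring
  have h01 : ∀ θ : ℝ, A θ 0 1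
      = Real.cos (b * θ) * ((a + b) * G θ) - Real.sin (b * θ) * F θ := by
    intro θ
    rw [hA θ, harg θ]
    simp only [Matrix.mul_apply, Fin.sum_univ_two, Matrix.add_apply, Matrix.smul_apply,
      Matrix.one_fin_two, Matrix.of_apply, Matrix.cons_val', Matrix.cons_val_zero,
      Matrix.cons_val_one, Matrix.head_cons, Matrix.head_fin_const, Matrix.empty_val',
      Matrix.cons_val_fin_one, smul_eq_mul, hFdef, hGdef]
    ring
  have h10 : ∀ θ : ℝ, A θ 1 0
      = Real.sin (b * θ) * F θ + Real.cos (b * θ) * ((a - b) * G θ) := by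
    intro θ
    rw [hA θ, harg θ]
    simp only [Matrix.mul_apply, Fin.sum_univ_two, Matrix.add_apply, Matrix.smul_apply,
      Matrix.one_fin_two, Matrix.of_apply, Matrix.cons_val', Matrix.cons_val_zero,
      Matrix.cons_val_one, Matrix.head_cons, Matrix.head_fin_const, Matrix.empty_val',
      Matrix.cons_val_fin_one, smul_eq_mul, hFdef, hGdef]
    ring
  have h11 : ∀ θ : ℝ, A θ 1 1
      = Real.sin (b * θ) * ((a + b) * G θ) + Real.cos (b * θ) * F θ := by
    intro θ
    rw [hA θ, harg θ]
    simp only [Matrix.mul_apply, Fin.sum_univ_two, Matrix.add_apply, Matrix.smul_apply,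
      Matrix.one_fin_two, Matrix.of_apply, Matrix.cons_val', Matrix.cons_val_zero,
      Matrix.cons_val_one, Matrix.head_cons, Matrix.head_fin_const, Matrix.empty_val',
      Matrix.cons_val_fin_one, smul_eq_mul, hFdef, hGdef]
    ring
  have hF0 : F 0 = 1 := by simp [hFdef, CC]
  have hG0 : G 0 = 0 := by simp [hGdef]
  have hF' : ∀ θ : ℝ, HasDerivAt F (k * G θ) θ := fun θ => hasDerivAt_F k θ
  have hG' : ∀ θ : ℝ, HasDerivAt G (F θ) θ := fun θ => hasDerivAt_G k θ
  constructor
  · ext i j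
    fin_cases i <;> fin_cases j <;>
      simp [h00 0, h01 0, h10 0, h11 0, hF0, hG0, Matrix.one_apply]
  · intro θ
    have hcos : HasDerivAt (fun s : ℝ => Real.cos (b * s))
        (-Real.sin (b * θ) * (b * 1)) θ := ((hasDerivAt_id θ).const_mul b).cos
    have hsin : HasDerivAt (fun s : ℝ => Real.sin (b * s))
        (Real.cos (b * θ) * (b * 1)) θ := ((hasDerivAt_id θ).const_mul b).sin
    set c := Real.cos (b * θ)
    set s := Real.sin (b * θ)
    refine ⟨!![(-s * (b * 1)) * F θ + c * (k * G θ) -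
          ((c * (b * 1)) * ((a - b) * G θ) + s * ((a - b) * F θ)),
        (-s * (b * 1)) * ((a + b) * G θ) + c * ((a + b) * F θ) -
          ((c * (b * 1)) * F θ + s * (k * G θ));
        (c * (b * 1)) * F θ + s * (k * G θ) +
          ((-s * (b * 1)) * ((a - b) * G θ) + c * ((a - b) * F θ)),
        (c * (b * 1)) * ((a + b) * G θ) + s * ((a + b) * F θ) +
          ((-s * (b * 1)) * F θ + c * (k * G θ))], ?_, ?_⟩
    · have hd00 : HasDerivAt (fun t : ℝ => A t 0 0)
          (-s * (b * 1) * F θ + c * (k * G θ) -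
            (c * (b * 1) * ((a - b) * G θ) + s * ((a - b) * F θ))) θ := by
        have e0 := (hcos.mul (hF' θ)).sub (hsin.mul ((hG' θ).const_mul (a - b)))
        rw [show (fun t : ℝ => A t 0 0) = _ from funext h00]; exact e0
      have hd01 : HasDerivAt (fun t : ℝ => A t 0 1)
          (-s * (b * 1) * ((a + b) * G θ) + c * ((a + b) * F θ) -
            (c * (b * 1) * F θ + s * (k * G θ))) θ := by
        have e0 := (hcos.mul ((hG' θ).const_mul (a + b))).sub (hsin.mul (hF' θ))
        rw [show (fun t : ℝ => A t 0 1) = _ from funext h01]; exact e0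
      have hd10 : HasDerivAt (fun t : ℝ => A t 1 0)
          (c * (b * 1) * F θ + s * (k * G θ) +
            (-s * (b * 1) * ((a - b) * G θ) + c * ((a - b) * F θ))) θ := by
        have e0 := (hsin.mul (hF' θ)).add (hcos.mul ((hG' θ).const_mul (a - b)))
        rw [show (fun t : ℝ => A t 1 0) = _ from funext h10]; exact e0
      have hd11 : HasDerivAt (fun t : ℝ => A t 1 1)
          (c * (b * 1) * ((a + b) * G θ) + s * ((a + b) * F θ) +
            (-s * (b * 1) * F θ + c * (k * G θ))) θ := by
        have e0 := (hsin.mul ((hG' θ).const_mul (a + b))).add (hcos.mul (hF' θ))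
        rw [show (fun t : ℝ => A t 1 1) = _ from funext h11]; exact e0
      intro i j
      fin_cases i <;> fin_cases j
      · exact hd00
      · exact hd01
      · exact hd10
      · exact hd11
    · have hP : s ^ 2 + c ^ 2 = 1 := Real.sin_sq_add_cos_sq (b * θ)
      have hFG : F θ ^ 2 - k * G θ ^ 2 = 1 := by
        have h := CC_SS_identity (k * θ ^ 2)
        simp only [hFdef, hGdef]
        nlinarith [h]
      have hdet : (A θ).det = 1 := by
        rw [Matrix.det_fin_two, h00 θ, h01 θ, h10 θ, h11 θ]
        linear_combination (F θ ^ 2 - k * G θ ^ 2) * hP + hFG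
      haveI := (A θ).invertibleOfIsUnitDet (by rw [hdet]; exact isUnit_one)
      rw [Matrix.mul_inv_eq_iff_eq_mul_of_invertible]
      have hc2 : Real.cos (2 * b * θ) = 2 * c ^ 2 - 1 := by
        rw [show 2 * b * θ = 2 * (b * θ) by ring, Real.cos_two_mul]
      have hs2 : Real.sin (2 * b * θ) = 2 * s * c := by
        rw [show 2 * b * θ = 2 * (b * θ) by ring, Real.sin_two_mul]
      rw [Matrix.smul_mul, Matrix.eta_fin_two (A θ), Matrix.mul_fin_two, smul_fin_two',
        h00 θ, h01 θ, h10 θ, h11 θ, hc2, hs2]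
      ext i j
      fin_cases i <;> fin_cases j <;>
        simp only [Fin.zero_eta, Fin.mk_one, Matrix.of_apply, Matrix.cons_val',
          Matrix.cons_val_zero, Matrix.cons_val_one, Matrix.head_cons, Matrix.head_fin_const,
          Matrix.empty_val', Matrix.cons_val_fin_one]
      · linear_combination (2 * a * b * G θ * c - 2 * a ^ 2 * G θ * c) * hP
      · linear_combination (-2 * a * F θ * c) * hP
      · linear_combination (-2 * a * F θ * c) * hP
      · linear_combination (-2 * a * b * G θ * c - 2 * a ^ 2 * G θ * c) * hP
end

section
/- For t ∈ [0,1), let M(t) = −[[cos(π√(1−t²)), (t+1)·sin(π√(1−t²))/√(1−t²)],[(t−1)·sin(π√(1−t²))/√(1−t²), cos(π√(1−t²))]]. Then M(t) is log-able with log M(t) = π(1/√(1−t²) − 1)·[[0, −t−1],[−t+1, 0]], and ‖log M(t)‖₂ = π(1/√(1−t²) − 1)(1+t), which tends to +∞ as t → 1⁻ with asymptotics √2·π·(1−t)^{−1/2} − 2π + O((1−t)^{1/2}). -/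
noncomputable def MoanEx (t : ℝ) : Matrix (Fin 2) (Fin 2) ℝ :=
  !![-Real.cos (Real.pi * Real.sqrt (1 - t ^ 2)),
      -((t + 1) * Real.sin (Real.pi * Real.sqrt (1 - t ^ 2)) / Real.sqrt (1 - t ^ 2));
     -((t - 1) * Real.sin (Real.pi * Real.sqrt (1 - t ^ 2)) / Real.sqrt (1 - t ^ 2)),
      -Real.cos (Real.pi * Real.sqrt (1 - t ^ 2))]

noncomputable def LogEx (t : ℝ) : Matrix (Fin 2) (Fin 2) ℝ :=
  (Real.pi * (1 / Real.sqrt (1 - t ^ 2) - 1)) • !![(0 : ℝ), -t - 1; -t + 1, 0]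

lemma opNorm_anti (p q : ℝ) (h : |q| ≤ |p|) : opNorm !![0, p; q, 0] = |p| := by
  set A : Matrix (Fin 2) (Fin 2) ℝ := !![0, p; q, 0] with hA
  set T := Matrix.toEuclideanCLM (𝕜 := ℝ) (n := Fin 2) A with hT
  have happ : ∀ x : Fin 2 → ℝ, T ((WithLp.equiv 2 (Fin 2 → ℝ)).symm x) =
      (WithLp.equiv 2 (Fin 2 → ℝ)).symm ![p * x 1, q * x 0] := by
    intro x
    rw [hT, WithLp.equiv_symm_apply, Matrix.toEuclideanCLM_toLp]
    congr 1
    funext i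
    fin_cases i <;>
      simp [hA, Matrix.mulVec, dotProduct, Fin.sum_univ_two]
  have hnorm : ∀ x : Fin 2 → ℝ, ‖(WithLp.equiv 2 (Fin 2 → ℝ)).symm x‖ =
      Real.sqrt (x 0 ^ 2 + x 1 ^ 2) := by
    intro x
    rw [EuclideanSpace.norm_eq]
    simp [Fin.sum_univ_two, Real.norm_eq_abs, sq_abs]
  apply le_antisymm
  · apply ContinuousLinearMap.opNorm_le_bound _ (abs_nonneg p)
    intro v
    have hv : v = (WithLp.equiv 2 (Fin 2 → ℝ)).symm (WithLp.equiv 2 (Fin 2 → ℝ) v) := rfl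
    set x := WithLp.equiv 2 (Fin 2 → ℝ) v with hx
    rw [hv, happ, hnorm, hnorm]
    rw [← Real.sqrt_sq (abs_nonneg p), ← Real.sqrt_mul (sq_nonneg |p|)]
    apply Real.sqrt_le_sqrt
    have hq : q^2 ≤ |p|^2 := by rw [← sq_abs q]; exact pow_le_pow_left₀ (abs_nonneg q) h 2
    have hp : p^2 = |p|^2 := (sq_abs p).symm
    simp only [Matrix.cons_val_zero, Matrix.cons_val_one, Matrix.head_cons]
    nlinarith [sq_nonneg (x 0), sq_nonneg (x 1)]
  · have key := T.le_opNorm ((WithLp.equiv 2 (Fin 2 → ℝ)).symm ![0, 1])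
    rw [happ, hnorm, hnorm] at key
    norm_num at key
    calc |p| = Real.sqrt (p^2 + 0^2) := by rw [← Real.sqrt_sq_eq_abs p]; norm_num
    _ ≤ ‖T‖ := by
        have : Real.sqrt (p^2) ≤ ‖T‖ := by
          refine le_trans (le_of_eq ?_) key
          norm_num
        refine le_trans (le_of_eq ?_) this
        norm_num


lemma spec_fin_two_s16 (A : Matrix (Fin 2) (Fin 2) ℂ) (z : ℂ) :
    z ∈ spectrum ℂ A ↔ (z - A 0 0) * (z - A 1 1) - A 0 1 * A 1 0 = 0 := by
  rw [spectrum.mem_iff, ← not_iff_not, not_not, Matrix.isUnit_iff_isUnit_det, isUnit_iff_ne_zero,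
    ne_eq, not_iff_not]
  rw [Matrix.det_fin_two]
  simp only [Matrix.sub_apply, Matrix.algebraMap_matrix_apply]
  norm_num


noncomputable def moanHom (t s : ℝ) (hs0 : s ≠ 0) (hs2 : s ^ 2 = 1 - t ^ 2) :
    ℂ →+* Matrix (Fin 2) (Fin 2) ℝ where
  toFun z := !![z.re, (-t - 1) * z.im / s; (-t + 1) * z.im / s, z.re]
  map_one' := by
    rw [Matrix.one_fin_two]
    norm_num
  map_mul' z w := by
    ext i j
    rw [Matrix.mul_fin_two]
    fin_cases i <;> fin_cases j <;>
      simp [Complex.mul_re, Complex.mul_im]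
    all_goals field_simp
    all_goals try ring
    all_goals linear_combination (-(z.im * w.im)) * hs2
  map_zero' := by
    ext i j
    fin_cases i <;> fin_cases j <;> simp
  map_add' z w := by
    ext i j
    fin_cases i <;> fin_cases j <;> simp [Matrix.add_apply] <;> ring

lemma moanHom_apply (t s : ℝ) (hs0 : s ≠ 0) (hs2 : s ^ 2 = 1 - t ^ 2) (z : ℂ) :
    moanHom t s hs0 hs2 z = !![z.re, (-t - 1) * z.im / s; (-t + 1) * z.im / s, z.re] := rfl

lemma moanHom_continuous (t s : ℝ) (hs0 : s ≠ 0) (hs2 : s ^ 2 = 1 - t ^ 2) :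
    Continuous (moanHom t s hs0 hs2) := by
  apply continuous_matrix
  intro i j
  fin_cases i <;> fin_cases j <;> simp [moanHom_apply] <;> fun_prop

open NormedSpace in
lemma exp_moan (t : ℝ) (ht : t ∈ Set.Ico (0:ℝ) 1) :
    NormedSpace.exp ((Real.pi * (1 / Real.sqrt (1 - t ^ 2) - 1)) •
        !![(0 : ℝ), -t - 1; -t + 1, 0]) =
    !![-Real.cos (Real.pi * Real.sqrt (1 - t ^ 2)),
      -((t + 1) * Real.sin (Real.pi * Real.sqrt (1 - t ^ 2)) / Real.sqrt (1 - t ^ 2));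
     -((t - 1) * Real.sin (Real.pi * Real.sqrt (1 - t ^ 2)) / Real.sqrt (1 - t ^ 2)),
      -Real.cos (Real.pi * Real.sqrt (1 - t ^ 2))] := by
  obtain ⟨ht0, ht1⟩ := ht
  have h1t : (0:ℝ) < 1 - t ^ 2 := by nlinarith
  set s := Real.sqrt (1 - t ^ 2) with hs
  have hs0 : 0 < s := Real.sqrt_pos.2 h1t
  have hs2 : s ^ 2 = 1 - t ^ 2 := Real.sq_sqrt h1t.le
  set Ψ := moanHom t s hs0.ne' hs2 with hΨ
  set θ : ℝ := Real.pi * (1 - s) with hθ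
  have hkey : (Real.pi * (1 / s - 1)) • (!![(0 : ℝ), -t - 1; -t + 1, 0]) = Ψ ((θ : ℂ) * Complex.I) := by
    rw [hΨ, moanHom_apply]
    ext i j
    rw [Matrix.smul_apply]
    fin_cases i <;> fin_cases j <;>
      simp [Complex.mul_re, Complex.mul_im] <;>
      field_simp <;> ring
  rw [hkey]
  letI : SeminormedRing (Matrix (Fin 2) (Fin 2) ℝ) := Matrix.linftyOpSemiNormedRing
  letI : NormedRing (Matrix (Fin 2) (Fin 2) ℝ) := Matrix.linftyOpNormedRing
  letI : NormedAlgebra ℝ (Matrix (Fin 2) (Fin 2) ℝ) := Matrix.linftyOpNormedAlgebra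
  erw [← map_exp Ψ (moanHom_continuous t s hs0.ne' hs2)]
  have hexp : exp ((θ : ℂ) * Complex.I) = Complex.exp ((θ : ℂ) * Complex.I) := by
    rw [Complex.exp_eq_exp_ℂ]
  rw [hexp, hΨ, moanHom_apply]
  have hre : (Complex.exp ((θ : ℂ) * Complex.I)).re = Real.cos θ := by
    simp [Complex.exp_mul_I, Complex.cos_ofReal_re, Complex.sin_ofReal_re]
  have him : (Complex.exp ((θ : ℂ) * Complex.I)).im = Real.sin θ := by
    simp [Complex.exp_mul_I, Complex.cos_ofReal_re, Complex.sin_ofReal_re]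
  rw [hre, him]
  have hcos : Real.cos θ = -Real.cos (Real.pi * s) := by
    rw [hθ, show Real.pi * (1 - s) = Real.pi - Real.pi * s by ring, Real.cos_pi_sub]
  have hsin : Real.sin θ = Real.sin (Real.pi * s) := by
    rw [hθ, show Real.pi * (1 - s) = Real.pi - Real.pi * s by ring, Real.sin_pi_sub]
  rw [hcos, hsin]
  congr 1 <;> · field_simp; ring

lemma opNorm_LogEx (t : ℝ) (ht : t ∈ Set.Ico (0:ℝ) 1) :
    opNorm (LogEx t) = Real.pi * (1 / Real.sqrt (1 - t ^ 2) - 1) * (1 + t) := by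
  obtain ⟨ht0, ht1⟩ := ht
  have h1t : (0:ℝ) < 1 - t ^ 2 := by nlinarith
  set s := Real.sqrt (1 - t ^ 2) with hs
  have hs0 : 0 < s := Real.sqrt_pos.2 h1t
  have hs2 : s ^ 2 = 1 - t ^ 2 := Real.sq_sqrt h1t.le
  have hs1 : s ≤ 1 := by nlinarith
  have hc0 : 0 ≤ Real.pi * (1 / s - 1) := by
    have h1 : 1 ≤ 1 / s := by rw [le_div_iff₀ hs0]; linarith
    have := Real.pi_pos
    nlinarith
  have hL : LogEx t = !![0, (Real.pi * (1 / s - 1)) * (-t - 1);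
      (Real.pi * (1 / s - 1)) * (-t + 1), 0] := by
    ext i j
    rw [LogEx, Matrix.smul_apply]
    fin_cases i <;> fin_cases j <;> simp [smul_eq_mul, hs]
  rw [hL, opNorm_anti]
  · rw [abs_of_nonpos (by nlinarith [mul_nonneg hc0 (show (0:ℝ) ≤ t + 1 by linarith)])]
    ring
  · rw [abs_of_nonneg (by nlinarith [mul_nonneg hc0 (show (0:ℝ) ≤ 1 - t by linarith)]),
      abs_of_nonpos (by nlinarith [mul_nonneg hc0 (show (0:ℝ) ≤ t + 1 by linarith)])]
    nlinarith [mul_nonneg hc0 ht0]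

set_option maxHeartbeats 1000000 in
theorem stmt16 :
    (∀ t ∈ Set.Ico (0 : ℝ) 1,
      LogAble (MoanEx t) ∧ IsPrincipalLog (MoanEx t) (LogEx t) ∧
        opNorm (LogEx t) = Real.pi * (1 / Real.sqrt (1 - t ^ 2) - 1) * (1 + t)) ∧
    Filter.Tendsto (fun t => opNorm (LogEx t)) (nhdsWithin 1 (Set.Iio 1)) Filter.atTop ∧
    Asymptotics.IsBigO (nhdsWithin 1 (Set.Iio 1))
      (fun t => opNorm (LogEx t) - (Real.sqrt 2 * Real.pi / Real.sqrt (1 - t) - 2 * Real.pi))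
      (fun t => Real.sqrt (1 - t)) := by
  have hIoo : Set.Ioo (0:ℝ) 1 ∈ nhdsWithin 1 (Set.Iio 1) :=
    Ioo_mem_nhdsLT_of_mem (by norm_num : (1:ℝ) ∈ Set.Ioc 0 1)
  refine ⟨?_, ?_, ?_⟩
  · -- main pointwise part
    intro t ht
    obtain ⟨ht0, ht1⟩ := ht
    have h1t : (0:ℝ) < 1 - t ^ 2 := by nlinarith
    set s := Real.sqrt (1 - t ^ 2) with hs
    have hs0 : 0 < s := Real.sqrt_pos.2 h1t
    have hs2 : s ^ 2 = 1 - t ^ 2 := Real.sq_sqrt h1t.le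
    have hs1 : s ≤ 1 := by nlinarith
    have hpi := Real.pi_pos
    refine ⟨?_, ⟨?_, ?_⟩, opNorm_LogEx t ⟨ht0, ht1⟩⟩
    · -- LogAble
      rintro z hz ⟨him, hre⟩
      rw [spec_fin_two_s16] at hz
      have e00 : ((MoanEx t).map (fun x => (x : ℂ))) 0 0
          = ((-Real.cos (Real.pi * s) : ℝ) : ℂ) := by simp [MoanEx, Matrix.map_apply, hs]
      have e11 : ((MoanEx t).map (fun x => (x : ℂ))) 1 1
          = ((-Real.cos (Real.pi * s) : ℝ) : ℂ) := by simp [MoanEx, Matrix.map_apply, hs]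
      have e01 : ((MoanEx t).map (fun x => (x : ℂ))) 0 1
          = ((-((t + 1) * Real.sin (Real.pi * s) / s) : ℝ) : ℂ) := by
        simp [MoanEx, Matrix.map_apply, hs]
      have e10 : ((MoanEx t).map (fun x => (x : ℂ))) 1 0
          = ((-((t - 1) * Real.sin (Real.pi * s) / s) : ℝ) : ℂ) := by
        simp [MoanEx, Matrix.map_apply, hs]
      rw [e00, e11, e01, e10] at hz
      have hzr : z = ((z.re : ℝ) : ℂ) := Complex.ext rfl (by simp [him])
      rw [hzr] at hz
      set r := z.re with hr
      have hzR : (r - (-Real.cos (Real.pi * s))) * (r - (-Real.cos (Real.pi * s)))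
          - (-((t + 1) * Real.sin (Real.pi * s) / s)) * (-((t - 1) * Real.sin (Real.pi * s) / s))
          = 0 := by exact_mod_cast hz
      have hkey : (r + Real.cos (Real.pi * s)) ^ 2 + Real.sin (Real.pi * s) ^ 2 = 0 := by
        have h := hzR
        field_simp at h
        have hkey' : ((r + Real.cos (Real.pi * s)) ^ 2 + Real.sin (Real.pi * s) ^ 2) * s ^ 2
            = 0 := by linear_combination h + Real.sin (Real.pi * s) ^ 2 * hs2
        rcases mul_eq_zero.1 hkey' with h' | h'
        · exact h'
        · exact absurd h' (by positivity)
      have hsin : Real.sin (Real.pi * s) = 0 := by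
        nlinarith [sq_nonneg (r + Real.cos (Real.pi * s)), sq_nonneg (Real.sin (Real.pi * s))]
      have hseq : s = 1 := by
        by_contra hne
        have hlt : s < 1 := lt_of_le_of_ne hs1 hne
        have hpos : 0 < Real.sin (Real.pi * s) :=
          Real.sin_pos_of_pos_of_lt_pi (by positivity) (by nlinarith)
        linarith
      have hcos : Real.cos (Real.pi * s) = -1 := by rw [hseq, mul_one, Real.cos_pi]
      rw [hcos] at hkey
      nlinarith [hkey]
    · -- exp equality
      show NormedSpace.exp (LogEx t) = MoanEx t
      rw [LogEx, MoanEx]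
      exact exp_moan t ⟨ht0, ht1⟩
    · -- spectrum of the log
      intro z hz
      rw [spec_fin_two_s16] at hz
      set c := Real.pi * (1 / s - 1) with hcdef
      have e00 : ((LogEx t).map (fun x => (x : ℂ))) 0 0 = 0 := by
        simp [LogEx, Matrix.map_apply]
      have e11 : ((LogEx t).map (fun x => (x : ℂ))) 1 1 = 0 := by
        simp [LogEx, Matrix.map_apply]
      have e01 : ((LogEx t).map (fun x => (x : ℂ))) 0 1 = ((c * (-t - 1) : ℝ) : ℂ) := by
        rw [Matrix.map_apply, LogEx, Matrix.smul_apply, hcdef]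
        push_cast [smul_eq_mul]
        norm_num [hs]
      have e10 : ((LogEx t).map (fun x => (x : ℂ))) 1 0 = ((c * (-t + 1) : ℝ) : ℂ) := by
        rw [Matrix.map_apply, LogEx, Matrix.smul_apply, hcdef]
        push_cast [smul_eq_mul]
        norm_num [hs]
      rw [e00, e11, e01, e10] at hz
      set a : ℝ := Real.pi * (1 - s) with ha
      have ha0 : 0 ≤ a := by nlinarith
      have halt : a < Real.pi := by nlinarith [mul_pos hpi hs0]
      have hcs : c * s = a := by
        rw [hcdef, ha]
        field_simp
      have hprod : (c * (-t - 1)) * (c * (-t + 1)) = -(a ^ 2) := by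
        linear_combination (-(c * s + a)) * hcs + c ^ 2 * hs2
      have hcast : ((c * (-t - 1) : ℝ) : ℂ) * ((c * (-t + 1) : ℝ) : ℂ) = -((a : ℝ) : ℂ) ^ 2 := by
        exact_mod_cast congrArg (fun x : ℝ => (x : ℂ)) hprod
      have hz2 : (z - Complex.I * (a : ℂ)) * (z + Complex.I * (a : ℂ)) = 0 := by
        linear_combination hz + hcast - ((a : ℝ) : ℂ) ^ 2 * Complex.I_sq
      have him1 : (Complex.I * ((a : ℝ) : ℂ)).im = a := by simp
      rcases mul_eq_zero.1 hz2 with h | h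
      · have hzz : z = Complex.I * ((a : ℝ) : ℂ) := by linear_combination h
        rw [hzz, Set.mem_Ioo, him1]
        constructor <;> linarith
      · have hzz : z = -(Complex.I * ((a : ℝ) : ℂ)) := by linear_combination h
        rw [hzz, Set.mem_Ioo, Complex.neg_im, him1]
        constructor <;> linarith
  · -- tendsto atTop
    have hbase : Filter.Tendsto (fun t : ℝ => Real.pi * (1 / Real.sqrt (1 - t ^ 2) - 1))
        (nhdsWithin 1 (Set.Iio 1)) Filter.atTop := by
      have hsq : Filter.Tendsto (fun t : ℝ => Real.sqrt (1 - t ^ 2))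
          (nhdsWithin 1 (Set.Iio 1)) (nhdsWithin 0 (Set.Ioi 0)) := by
        rw [tendsto_nhdsWithin_iff]
        constructor
        · have hcont : Continuous (fun t : ℝ => Real.sqrt (1 - t ^ 2)) := by fun_prop
          have := hcont.continuousAt (x := (1:ℝ))
          have h0 : Real.sqrt (1 - (1:ℝ) ^ 2) = 0 := by norm_num
          rw [ContinuousAt, h0] at this
          exact this.mono_left nhdsWithin_le_nhds
        · filter_upwards [hIoo] with t ht
          exact Real.sqrt_pos.2 (by nlinarith [ht.1, ht.2])
      have hinv : Filter.Tendsto (fun t : ℝ => (Real.sqrt (1 - t ^ 2))⁻¹)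
          (nhdsWithin 1 (Set.Iio 1)) Filter.atTop := tendsto_inv_nhdsGT_zero.comp hsq
      have h2 : Filter.Tendsto (fun t : ℝ => (Real.sqrt (1 - t ^ 2))⁻¹ + (-1))
          (nhdsWithin 1 (Set.Iio 1)) Filter.atTop :=
        Filter.tendsto_atTop_add_const_right _ _ hinv
      have h3 := h2.const_mul_atTop Real.pi_pos
      refine h3.congr fun t => by rw [one_div]; ring
    refine Filter.tendsto_atTop_mono' _ ?_ hbase
    filter_upwards [hIoo] with t ht
    have heq := opNorm_LogEx t ⟨ht.1.le, ht.2⟩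
    rw [heq]
    have h1t : (0:ℝ) < 1 - t ^ 2 := by nlinarith [ht.1, ht.2]
    have hs0 : 0 < Real.sqrt (1 - t ^ 2) := Real.sqrt_pos.2 h1t
    have hs1 : Real.sqrt (1 - t ^ 2) ≤ 1 := by
      nlinarith [Real.sq_sqrt h1t.le, hs0, ht.1, ht.2]
    have hc0 : 0 ≤ Real.pi * (1 / Real.sqrt (1 - t ^ 2) - 1) := by
      have : 1 ≤ 1 / Real.sqrt (1 - t ^ 2) := by rw [le_div_iff₀ hs0]; linarith
      nlinarith [Real.pi_pos]
    nlinarith [ht.1, hc0]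
  · -- big O
    rw [Asymptotics.isBigO_iff]
    refine ⟨4, ?_⟩
    filter_upwards [hIoo] with t ht
    obtain ⟨ht0, ht1⟩ := ht
    have heq := opNorm_LogEx t ⟨ht0.le, ht1⟩
    set u := Real.sqrt (1 - t) with hu
    set w := Real.sqrt (1 + t) with hw
    have hu2 : u ^ 2 = 1 - t := Real.sq_sqrt (by linarith)
    have hw2 : w ^ 2 = 1 + t := Real.sq_sqrt (by linarith)
    have hu0 : 0 < u := Real.sqrt_pos.2 (by linarith)
    have hw0 : 0 < w := Real.sqrt_pos.2 (by linarith)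
    have hu1 : u ≤ 1 := by nlinarith
    have hw1 : 1 ≤ w := by nlinarith
    have h20 : (0:ℝ) < Real.sqrt 2 := Real.sqrt_pos.2 (by norm_num)
    have h21 : 1 ≤ Real.sqrt 2 := by
      nlinarith [Real.sq_sqrt (show (0:ℝ) ≤ 2 by norm_num)]
    have h22 : Real.sqrt 2 ^ 2 = 2 := Real.sq_sqrt (by norm_num)
    have hsuw : Real.sqrt (1 - t ^ 2) = u * w := by
      rw [hu, hw, ← Real.sqrt_mul (by linarith : (0:ℝ) ≤ 1 - t)]
      ring_nf
    have hkey : (w - Real.sqrt 2) * (w + Real.sqrt 2) = -u ^ 2 := by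
      linear_combination hw2 + hu2 - h22
    have hd : (opNorm (LogEx t) - (Real.sqrt 2 * Real.pi / Real.sqrt (1 - t) - 2 * Real.pi)) * u
        = Real.pi * (w - Real.sqrt 2) + Real.pi * u ^ 3 := by
      rw [heq, hsuw, ← hu]
      field_simp
      linear_combination (-(u * w)) * hu2 + (-1) * hw2
    rw [Real.norm_eq_abs, Real.norm_eq_abs, abs_of_nonneg hu0.le]
    have hpi4 := Real.pi_le_four
    have hpi0 := Real.pi_pos
    have hwsq2 : w ≤ Real.sqrt 2 := by rw [hw]; exact Real.sqrt_le_sqrt (by linarith)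
    have hlow : Real.sqrt 2 - w ≤ u ^ 2 / 2 := by
      nlinarith [hkey, mul_nonneg (sub_nonneg.2 hwsq2)
        (show (0:ℝ) ≤ w + Real.sqrt 2 - 2 by linarith)]
    have habs2 : |(opNorm (LogEx t) - (Real.sqrt 2 * Real.pi / Real.sqrt (1 - t)
        - 2 * Real.pi)) * u| ≤ 4 * u * u := by
      rw [abs_le]
      constructor
      · rw [hd]
        nlinarith [mul_le_mul_of_nonneg_left hlow hpi0.le,
          mul_nonneg (sub_nonneg.2 hpi4) (sq_nonneg u),
          mul_nonneg hpi0.le (mul_nonneg (sq_nonneg u) hu0.le)]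
      · rw [hd]
        nlinarith [mul_nonneg hpi0.le (sub_nonneg.2 hwsq2),
          mul_nonneg (sub_nonneg.2 hpi4) (sq_nonneg u),
          mul_nonneg (mul_nonneg hpi0.le (sq_nonneg u)) (sub_nonneg.2 hu1)]
    have hmul : |opNorm (LogEx t) - (Real.sqrt 2 * Real.pi / Real.sqrt (1 - t)
        - 2 * Real.pi)| * u = |(opNorm (LogEx t) - (Real.sqrt 2 * Real.pi / Real.sqrt (1 - t)
        - 2 * Real.pi)) * u| := by
      rw [abs_mul, abs_of_nonneg hu0.le]
    have habs : |opNorm (LogEx t) - (Real.sqrt 2 * Real.pi / Real.sqrt (1 - t)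
        - 2 * Real.pi)| * u ≤ (4 * u) * u := by
      rw [hmul]
      exact habs2.trans_eq (by ring)
    exact le_of_mul_le_mul_right habs hu0
end

section
/- For all real x ≠ 0, (1 + x)/eˣ < x/sinh x. -/
lemma sinh_lt_mul_cosh {x : ℝ} (hx : 0 < x) : Real.sinh x < x * Real.cosh x := by
  have h : StrictMonoOn (fun y : ℝ => y * Real.cosh y - Real.sinh y) (Set.Ici 0) := by
    apply strictMonoOn_of_deriv_pos (convex_Ici 0)
    · fun_prop
    · intro y hy
      simp only [interior_Ici, Set.mem_Ioi] at hy
      have : deriv (fun y : ℝ => y * Real.cosh y - Real.sinh y) y = y * Real.sinh y := by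
        simp [mul_comm]
      rw [this]
      exact mul_pos hy (Real.sinh_pos_iff.mpr hy)
  have := h (Set.self_mem_Ici) (Set.mem_Ici.mpr hx.le) hx
  simpa using this

theorem stmt18 (x : ℝ) (hx : x ≠ 0) : (1 + x) / Real.exp x < x / Real.sinh x := by
  have he : Real.exp x = Real.sinh x + Real.cosh x := (Real.sinh_add_cosh x).symm
  have hep : 0 < Real.exp x := Real.exp_pos x
  rcases hx.lt_or_gt with h | h
  · have h1 : Real.sinh x < 0 := Real.sinh_neg_iff.mpr h
    have h2 : x * Real.cosh x < Real.sinh x := by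
      have := sinh_lt_mul_cosh (neg_pos.mpr h)
      rw [Real.sinh_neg, Real.cosh_neg] at this
      linarith
    have hq : x / Real.sinh x = (-x) / (-Real.sinh x) := by ring
    rw [hq, div_lt_div_iff₀ hep (by linarith)]
    nlinarith
  · have h1 : 0 < Real.sinh x := Real.sinh_pos_iff.mpr h
    have h2 : Real.sinh x < x * Real.cosh x := sinh_lt_mul_cosh h
    rw [div_lt_div_iff₀ hep h1]
    nlinarith
end
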